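/- arXiv:2111.13055 — 3 statements merged into one kernel-verified Lean document; each statement's English description precedes it below -/
import Mathlib

section
/- (Proposition 1.) Under the uplink model with h_J ≠ 0, suppose b̂ ∈ ℂ^B is a nonzero maximizer of b ↦ |h_Jᴴ b|² / ‖b‖² over nonzero b ∈ ℂ^B, â ∈ ℂ^B is a nonzero maximizer of a ↦ |h_Jᴴ a|² / (aᴴ C_y a) over nonzero a ∈ ℂ^B, and β̂ = E_J (h_Jᴴ â)(b̂ᴴ h_J) / ( ‖b̂‖² (âᴴ C_y â) ). Then (β̂, b̂, â) minimizes the mean squared error: for all β ∈ ℂ and all a, b ∈ ℂ^B, E[‖β̂ b̂ (âᴴ y) − h_J s_J‖²] ≤ E[‖β b (aᴴ y) − h_J s_J‖²]. -/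
open MeasureTheory ProbabilityTheory Matrix
open scoped ComplexOrder

/-- Squared Euclidean norm of a complex vector. -/
noncomputable def vecNormSq {m : Type*} [Fintype m] (v : m → ℂ) : ℝ := ∑ i, ‖v i‖ ^ 2

section Aux

lemma vecNormSq_nonneg {m : Type*} [Fintype m] (v : m → ℂ) : 0 ≤ vecNormSq v :=
  Finset.sum_nonneg fun i _ => by positivity

lemma vecNormSq_eq_zero {m : Type*} [Fintype m] {v : m → ℂ} (h : vecNormSq v = 0) : v = 0 := by
  have := (Finset.sum_eq_zero_iff_of_nonneg (fun i _ => by positivity)).mp h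
  funext i
  simpa using this i (Finset.mem_univ i)

lemma vecNormSq_pos {m : Type*} [Fintype m] {v : m → ℂ} (h : v ≠ 0) : 0 < vecNormSq v :=
  lt_of_le_of_ne (vecNormSq_nonneg v) fun h2 => h (vecNormSq_eq_zero h2.symm)

lemma normsq_c (z : ℂ) : z * (starRingEnd ℂ) z = ((‖z‖^2 : ℝ) : ℂ) := by
  rw [Complex.mul_conj]; norm_cast; rw [Complex.normSq_eq_norm_sq]

lemma conj_dot {m : Type*} [Fintype m] (v w : m → ℂ) :
    (starRingEnd ℂ) (star v ⬝ᵥ w) = star w ⬝ᵥ v := by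
  simp only [dotProduct, map_sum, _root_.map_mul]
  refine Finset.sum_congr rfl fun i _ => ?_
  simp only [Pi.star_apply, starRingEnd_apply, star_star]
  ring

lemma dot_self_star {m : Type*} [Fintype m] (v : m → ℂ) :
    v ⬝ᵥ star v = ((vecNormSq v : ℝ) : ℂ) := by
  unfold vecNormSq
  push_cast
  rw [dotProduct]
  refine Finset.sum_congr rfl fun i _ => ?_
  have h := normsq_c (v i)
  push_cast at h
  exact h

lemma star_dot_self {m : Type*} [Fintype m] (v : m → ℂ) :
    star v ⬝ᵥ v = ((vecNormSq v : ℝ) : ℂ) := by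
  have h := dot_self_star v
  rw [dotProduct] at h ⊢
  rw [← h]
  exact Finset.sum_congr rfl fun i _ => mul_comm _ _

lemma expand_pt {m : Type*} [Fintype m] (d e : ℂ) (b h : m → ℂ) :
    vecNormSq (d • b - e • h)
      = ‖d‖^2 * vecNormSq b + ‖e‖^2 * vecNormSq h
        - 2 * (d * (starRingEnd ℂ) e * (star h ⬝ᵥ b)).re := by
  have nz : ∀ z : ℂ, ‖z‖^2 = Complex.normSq z := fun z => by
    rw [Complex.sq_norm]
  have key : ∀ x y : ℂ, ‖x - y‖^2 = ‖x‖^2 + ‖y‖^2 - 2 * (x * (starRingEnd ℂ) y).re := by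
    intro x y
    rw [nz, nz, nz, Complex.normSq_sub]
  unfold vecNormSq
  simp only [Pi.sub_apply, Pi.smul_apply, smul_eq_mul, key, norm_mul, mul_pow]
  rw [Finset.sum_sub_distrib, Finset.sum_add_distrib, ← Finset.mul_sum, ← Finset.mul_sum]
  congr 1
  have : ∀ i : m, 2 * ((d * b i) * (starRingEnd ℂ) (e * h i)).re
      = 2 * ((d * (starRingEnd ℂ) e) * ((starRingEnd ℂ) (h i) * b i)).re := by
    intro i; rw [_root_.map_mul]; ring_nf
  rw [Finset.sum_congr rfl fun i _ => this i, ← Finset.mul_sum, ← Complex.re_sum,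
    ← Finset.mul_sum]
  congr 2

variable {Ω : Type*} [MeasurableSpace Ω] {μ : Measure Ω} [IsProbabilityMeasure μ]

lemma mulL1 {f g : Ω → ℂ} (hf : MemLp f 2 μ) (hg : MemLp g 2 μ) :
    Integrable (fun ω => f ω * g ω) μ := by
  have : MemLp (f • g) 1 μ := by
    haveI : ENNReal.HolderTriple 2 2 1 := ⟨by rw [ENNReal.inv_two_add_inv_two, inv_one]⟩
    exact hg.smul hf
  exact memLp_one_iff_integrable.mp this

omit [IsProbabilityMeasure μ] in
lemma conjL2 {f : Ω → ℂ} (hf : MemLp f 2 μ) : MemLp (fun ω => (starRingEnd ℂ) (f ω)) 2 μ :=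
  (Complex.conjCLE.toContinuousLinearMap).comp_memLp' hf

omit [IsProbabilityMeasure μ] in
lemma cimint {f : Ω → ℂ} (hf : Integrable f μ) : (∫ ω, f ω ∂μ).im = ∫ ω, (f ω).im ∂μ := by
  simpa [RCLike.im_to_complex] using (integral_im (𝕜 := ℂ) hf).symm

omit [IsProbabilityMeasure μ] in
lemma creint {f : Ω → ℂ} (hf : Integrable f μ) : (∫ ω, f ω ∂μ).re = ∫ ω, (f ω).re ∂μ := by
  simpa [RCLike.re_to_complex] using (integral_re (𝕜 := ℂ) hf).symm

lemma indep_integral_mul {f g : Ω → ℂ} (hfg : IndepFun f g μ)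
    (hf : MemLp f 2 μ) (hg : MemLp g 2 μ) :
    ∫ ω, f ω * g ω ∂μ = (∫ ω, f ω ∂μ) * ∫ ω, g ω ∂μ := by
  have hint : Integrable (fun ω => f ω * g ω) μ := mulL1 hf hg
  have hfi : Integrable f μ := hf.integrable (by norm_num)
  have hgi : Integrable g μ := hg.integrable (by norm_num)
  have mre : Measurable (Complex.re) := Complex.measurable_re
  have mim : Measurable (Complex.im) := Complex.measurable_im
  have hrr := (hfg.comp mre mre).integral_mul_eq_mul_integral (hfi.re.aestronglyMeasurable) (hgi.re.aestronglyMeasurable)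
  have hri := (hfg.comp mre mim).integral_mul_eq_mul_integral (hfi.re.aestronglyMeasurable) (hgi.im.aestronglyMeasurable)
  have hir := (hfg.comp mim mre).integral_mul_eq_mul_integral (hfi.im.aestronglyMeasurable) (hgi.re.aestronglyMeasurable)
  have hii := (hfg.comp mim mim).integral_mul_eq_mul_integral (hfi.im.aestronglyMeasurable) (hgi.im.aestronglyMeasurable)
  have irr : Integrable (fun ω => (f ω).re * (g ω).re) μ :=
    (hfg.comp mre mre).integrable_mul hfi.re hgi.re
  have iri : Integrable (fun ω => (f ω).re * (g ω).im) μ :=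
    (hfg.comp mre mim).integrable_mul hfi.re hgi.im
  have iir : Integrable (fun ω => (f ω).im * (g ω).re) μ :=
    (hfg.comp mim mre).integrable_mul hfi.im hgi.re
  have iii : Integrable (fun ω => (f ω).im * (g ω).im) μ :=
    (hfg.comp mim mim).integrable_mul hfi.im hgi.im
  have efr : (∫ ω, f ω ∂μ).re = ∫ ω, (f ω).re ∂μ := by
    simpa [RCLike.re_to_complex] using (integral_re (𝕜 := ℂ) hfi).symm
  have egr : (∫ ω, g ω ∂μ).re = ∫ ω, (g ω).re ∂μ := by
    simpa [RCLike.re_to_complex] using (integral_re (𝕜 := ℂ) hgi).symm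
  have efi : (∫ ω, f ω ∂μ).im = ∫ ω, (f ω).im ∂μ := by
    simpa [RCLike.im_to_complex] using (integral_im (𝕜 := ℂ) hfi).symm
  have egi : (∫ ω, g ω ∂μ).im = ∫ ω, (g ω).im ∂μ := by
    simpa [RCLike.im_to_complex] using (integral_im (𝕜 := ℂ) hgi).symm
  have hrr' : (∫ ω, (f ω).re * (g ω).re ∂μ) = (∫ ω, (f ω).re ∂μ) * ∫ ω, (g ω).re ∂μ := hrr
  have hri' : (∫ ω, (f ω).re * (g ω).im ∂μ) = (∫ ω, (f ω).re ∂μ) * ∫ ω, (g ω).im ∂μ := hri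
  have hir' : (∫ ω, (f ω).im * (g ω).re ∂μ) = (∫ ω, (f ω).im ∂μ) * ∫ ω, (g ω).re ∂μ := hir
  have hii' : (∫ ω, (f ω).im * (g ω).im ∂μ) = (∫ ω, (f ω).im ∂μ) * ∫ ω, (g ω).im ∂μ := hii
  apply Complex.ext
  · have h1 : (∫ ω, f ω * g ω ∂μ).re = ∫ ω, (f ω * g ω).re ∂μ := by
      simpa [RCLike.re_to_complex] using (integral_re (𝕜 := ℂ) hint).symm
    rw [h1, Complex.mul_re]
    simp only [Complex.mul_re] at *
    calc ∫ ω, ((f ω).re * (g ω).re - (f ω).im * (g ω).im) ∂μ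
        = (∫ ω, (f ω).re * (g ω).re ∂μ) - ∫ ω, (f ω).im * (g ω).im ∂μ := integral_sub irr iii
      _ = _ := by rw [hrr', hii', efr, egr, efi, egi]
  · have h1 : (∫ ω, f ω * g ω ∂μ).im = ∫ ω, (f ω * g ω).im ∂μ := by
      simpa [RCLike.im_to_complex] using (integral_im (𝕜 := ℂ) hint).symm
    rw [h1, Complex.mul_im]
    simp only [Complex.mul_im] at *
    calc ∫ ω, ((f ω).re * (g ω).im + (f ω).im * (g ω).re) ∂μ
        = (∫ ω, (f ω).re * (g ω).im ∂μ) + ∫ ω, (f ω).im * (g ω).re ∂μ := integral_add iri iir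
      _ = _ := by rw [hri', hir', efr, egr, efi, egi]

lemma cross_zero_l {f g : Ω → ℂ} (hfg : IndepFun f g μ)
    (hf : MemLp f 2 μ) (hg : MemLp g 2 μ) (h0 : ∫ ω, f ω ∂μ = 0) :
    ∫ ω, f ω * g ω ∂μ = 0 := by
  rw [indep_integral_mul hfg hf hg, h0, zero_mul]

lemma cross_zero_r {f g : Ω → ℂ} (hfg : IndepFun f g μ)
    (hf : MemLp f 2 μ) (hg : MemLp g 2 μ) (h0 : ∫ ω, g ω ∂μ = 0) :
    ∫ ω, f ω * g ω ∂μ = 0 := by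
  rw [indep_integral_mul hfg hf hg, h0, mul_zero]

omit [IsProbabilityMeasure μ] in
lemma compL2 {k : ℕ} {f : Ω → Fin k → ℂ} (hf : MemLp f 2 μ) (j : Fin k) :
    MemLp (fun ω => f ω j) 2 μ :=
  (ContinuousLinearMap.proj (R := ℂ) (φ := fun _ : Fin k => ℂ) j).comp_memLp' hf

omit [IsProbabilityMeasure μ] in
lemma sumL2 {k : ℕ} {f : Ω → Fin k → ℂ} (hf : MemLp f 2 μ) (g : Fin k → ℂ) :
    MemLp (fun ω => ∑ j, g j * f ω j) 2 μ := by
  have := memLp_finset_sum' (μ := μ) (p := 2) Finset.univ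
    (f := fun j ω => g j * f ω j) (fun j _ => (compL2 hf j).const_mul (g j))
  refine this.ae_eq (Filter.Eventually.of_forall fun ω => ?_)
  simp [Finset.sum_apply]

lemma sum_int_zero {k : ℕ} {f : Ω → Fin k → ℂ} (hf : MemLp f 2 μ)
    (hmean : ∀ j, ∫ ω, f ω j ∂μ = 0) (g : Fin k → ℂ) :
    ∫ ω, ∑ j, g j * f ω j ∂μ = 0 := by
  rw [integral_finset_sum _ (fun j _ =>
    (((compL2 hf j).integrable (by norm_num)).const_mul (g j)))]
  simp [integral_const_mul, hmean]

lemma meas_sum {k : ℕ} (g : Fin k → ℂ) :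
    Measurable (fun v : Fin k → ℂ => ∑ j, g j * v j) :=
  Finset.measurable_sum _ fun j _ => by fun_prop

lemma sum_covar {k : ℕ} {f : Ω → Fin k → ℂ} (hf : MemLp f 2 μ) {E0 : ℝ}
    (hcov : ∀ i j, ∫ ω, f ω i * (starRingEnd ℂ) (f ω j) ∂μ = if i = j then (E0:ℂ) else 0)
    (g : Fin k → ℂ) :
    ∫ ω, (∑ j, g j * f ω j) * (starRingEnd ℂ) (∑ j, g j * f ω j) ∂μ
      = ((E0 * ∑ j, ‖g j‖^2 : ℝ) : ℂ) := by
  have hpt : ∀ ω, (∑ j, g j * f ω j) * (starRingEnd ℂ) (∑ j, g j * f ω j)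
      = ∑ j, ∑ l, (g j * (starRingEnd ℂ) (g l)) * (f ω j * (starRingEnd ℂ) (f ω l)) := by
    intro ω
    rw [map_sum, Finset.sum_mul_sum]
    refine Finset.sum_congr rfl fun j _ => Finset.sum_congr rfl fun l _ => ?_
    rw [_root_.map_mul]; ring
  rw [integral_congr_ae (Filter.Eventually.of_forall hpt)]
  rw [integral_finset_sum _ (fun j _ => integrable_finset_sum _ (fun l _ =>
    (mulL1 (compL2 hf j) (conjL2 (compL2 hf l))).const_mul _))]
  have h1 : ∀ j, ∫ ω, ∑ l, (g j * (starRingEnd ℂ) (g l)) * (f ω j * (starRingEnd ℂ) (f ω l)) ∂μ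
      = (g j * (starRingEnd ℂ) (g j)) * (E0 : ℂ) := by
    intro j
    rw [integral_finset_sum _ (fun l _ =>
      (mulL1 (compL2 hf j) (conjL2 (compL2 hf l))).const_mul _)]
    have h2 : ∀ l, ∫ ω, (g j * (starRingEnd ℂ) (g l)) * (f ω j * (starRingEnd ℂ) (f ω l)) ∂μ
        = (g j * (starRingEnd ℂ) (g l)) * (if j = l then (E0:ℂ) else 0) := by
      intro l; rw [integral_const_mul, hcov j l]
    rw [Finset.sum_congr rfl fun l _ => h2 l]
    simp [mul_ite]
  rw [Finset.sum_congr rfl fun j _ => h1 j]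
  have h3 : ∀ j : Fin k, (g j * (starRingEnd ℂ) (g j)) * (E0:ℂ) = ((‖g j‖^2 * E0 : ℝ) : ℂ) := by
    intro j
    rw [Complex.mul_conj]
    norm_cast
    rw [Complex.normSq_eq_norm_sq]
  rw [Finset.sum_congr rfl fun j _ => h3 j]
  push_cast
  rw [← Finset.sum_mul]
  ring

lemma triple_moments {Ω : Type*} [MeasurableSpace Ω] {μ : Measure Ω} [IsProbabilityMeasure μ]
    (X W Z : Ω → ℂ) (c : ℂ) {EX EW EZ : ℝ}
    (mX : MemLp X 2 μ) (mW : MemLp W 2 μ) (mZ : MemLp Z 2 μ)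
    (iXW : IndepFun X W μ) (iXZ : IndepFun X Z μ) (iWZ : IndepFun W Z μ)
    (hX0 : ∫ ω, X ω ∂μ = 0) (hZ0 : ∫ ω, Z ω ∂μ = 0)
    (hXX : ∫ ω, X ω * (starRingEnd ℂ) (X ω) ∂μ = (EX:ℂ))
    (hWW : ∫ ω, W ω * (starRingEnd ℂ) (W ω) ∂μ = (EW:ℂ))
    (hZZ : ∫ ω, Z ω * (starRingEnd ℂ) (Z ω) ∂μ = (EZ:ℂ)) :
    (∫ ω, (X ω + c * W ω + Z ω) * (starRingEnd ℂ) (X ω + c * W ω + Z ω) ∂μ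
      = ((EX + ‖c‖^2 * EW + EZ : ℝ) : ℂ))
    ∧ (∫ ω, (X ω + c * W ω + Z ω) * (starRingEnd ℂ) (W ω) ∂μ = c * (EW : ℂ)) := by
  have mc : Measurable fun z : ℂ => (starRingEnd ℂ) z := Complex.continuous_conj.measurable
  have cX := conjL2 mX
  have cW := conjL2 mW
  have cZ := conjL2 mZ
  have hXc0 : ∫ ω, (starRingEnd ℂ) (X ω) ∂μ = 0 := by rw [integral_conj, hX0, map_zero]
  have hZc0 : ∫ ω, (starRingEnd ℂ) (Z ω) ∂μ = 0 := by rw [integral_conj, hZ0, map_zero]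
  have z1 : ∫ ω, X ω * (starRingEnd ℂ) (W ω) ∂μ = 0 :=
    cross_zero_l (iXW.comp measurable_id mc) mX cW hX0
  have z2 : ∫ ω, X ω * (starRingEnd ℂ) (Z ω) ∂μ = 0 :=
    cross_zero_l (iXZ.comp measurable_id mc) mX cZ hX0
  have z3 : ∫ ω, W ω * (starRingEnd ℂ) (X ω) ∂μ = 0 :=
    cross_zero_r (iXW.symm.comp measurable_id mc) mW cX hXc0
  have z4 : ∫ ω, W ω * (starRingEnd ℂ) (Z ω) ∂μ = 0 :=
    cross_zero_r (iWZ.comp measurable_id mc) mW cZ hZc0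
  have z5 : ∫ ω, Z ω * (starRingEnd ℂ) (X ω) ∂μ = 0 :=
    cross_zero_l (iXZ.symm.comp measurable_id mc) mZ cX hZ0
  have z6 : ∫ ω, Z ω * (starRingEnd ℂ) (W ω) ∂μ = 0 :=
    cross_zero_l (iWZ.symm.comp measurable_id mc) mZ cW hZ0
  have JXX := mulL1 mX cX
  have JWW := mulL1 mW cW
  have JZZ := mulL1 mZ cZ
  have JXW := mulL1 mX cW
  have JXZ := mulL1 mX cZ
  have JWX := mulL1 mW cX
  have JWZ := mulL1 mW cZ
  have JZX := mulL1 mZ cX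
  have JZW := mulL1 mZ cW
  constructor
  · have hpt : ∀ ω, (X ω + c * W ω + Z ω) * (starRingEnd ℂ) (X ω + c * W ω + Z ω)
        = X ω * (starRingEnd ℂ) (X ω)
          + (c * (starRingEnd ℂ) c) * (W ω * (starRingEnd ℂ) (W ω))
          + Z ω * (starRingEnd ℂ) (Z ω)
          + (starRingEnd ℂ) c * (X ω * (starRingEnd ℂ) (W ω))
          + X ω * (starRingEnd ℂ) (Z ω)
          + c * (W ω * (starRingEnd ℂ) (X ω))
          + c * (W ω * (starRingEnd ℂ) (Z ω))
          + Z ω * (starRingEnd ℂ) (X ω)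
          + (starRingEnd ℂ) c * (Z ω * (starRingEnd ℂ) (W ω)) := by
      intro ω
      simp only [map_add, _root_.map_mul]
      ring
    rw [integral_congr_ae (Filter.Eventually.of_forall hpt)]
    have P2 : Integrable (fun ω => X ω * (starRingEnd ℂ) (X ω) + (c * (starRingEnd ℂ) c) * (W ω * (starRingEnd ℂ) (W ω))) μ := by
      exact (JXX).add (JWW.const_mul _)
    have P3 : Integrable (fun ω => X ω * (starRingEnd ℂ) (X ω) + (c * (starRingEnd ℂ) c) * (W ω * (starRingEnd ℂ) (W ω)) + Z ω * (starRingEnd ℂ) (Z ω)) μ := by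
      exact (P2).add (JZZ)
    have P4 : Integrable (fun ω => X ω * (starRingEnd ℂ) (X ω) + (c * (starRingEnd ℂ) c) * (W ω * (starRingEnd ℂ) (W ω)) + Z ω * (starRingEnd ℂ) (Z ω) + (starRingEnd ℂ) c * (X ω * (starRingEnd ℂ) (W ω))) μ := by
      exact (P3).add (JXW.const_mul _)
    have P5 : Integrable (fun ω => X ω * (starRingEnd ℂ) (X ω) + (c * (starRingEnd ℂ) c) * (W ω * (starRingEnd ℂ) (W ω)) + Z ω * (starRingEnd ℂ) (Z ω) + (starRingEnd ℂ) c * (X ω * (starRingEnd ℂ) (W ω)) + X ω * (starRingEnd ℂ) (Z ω)) μ := by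
      exact (P4).add (JXZ)
    have P6 : Integrable (fun ω => X ω * (starRingEnd ℂ) (X ω) + (c * (starRingEnd ℂ) c) * (W ω * (starRingEnd ℂ) (W ω)) + Z ω * (starRingEnd ℂ) (Z ω) + (starRingEnd ℂ) c * (X ω * (starRingEnd ℂ) (W ω)) + X ω * (starRingEnd ℂ) (Z ω) + c * (W ω * (starRingEnd ℂ) (X ω))) μ := by
      exact (P5).add (JWX.const_mul _)
    have P7 : Integrable (fun ω => X ω * (starRingEnd ℂ) (X ω) + (c * (starRingEnd ℂ) c) * (W ω * (starRingEnd ℂ) (W ω)) + Z ω * (starRingEnd ℂ) (Z ω) + (starRingEnd ℂ) c * (X ω * (starRingEnd ℂ) (W ω)) + X ω * (starRingEnd ℂ) (Z ω) + c * (W ω * (starRingEnd ℂ) (X ω)) + c * (W ω * (starRingEnd ℂ) (Z ω))) μ := by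
      exact (P6).add (JWZ.const_mul _)
    have P8 : Integrable (fun ω => X ω * (starRingEnd ℂ) (X ω) + (c * (starRingEnd ℂ) c) * (W ω * (starRingEnd ℂ) (W ω)) + Z ω * (starRingEnd ℂ) (Z ω) + (starRingEnd ℂ) c * (X ω * (starRingEnd ℂ) (W ω)) + X ω * (starRingEnd ℂ) (Z ω) + c * (W ω * (starRingEnd ℂ) (X ω)) + c * (W ω * (starRingEnd ℂ) (Z ω)) + Z ω * (starRingEnd ℂ) (X ω)) μ := by
      exact (P7).add (JZX)
    have P9 : Integrable (fun ω => X ω * (starRingEnd ℂ) (X ω) + (c * (starRingEnd ℂ) c) * (W ω * (starRingEnd ℂ) (W ω)) + Z ω * (starRingEnd ℂ) (Z ω) + (starRingEnd ℂ) c * (X ω * (starRingEnd ℂ) (W ω)) + X ω * (starRingEnd ℂ) (Z ω) + c * (W ω * (starRingEnd ℂ) (X ω)) + c * (W ω * (starRingEnd ℂ) (Z ω)) + Z ω * (starRingEnd ℂ) (X ω) + (starRingEnd ℂ) c * (Z ω * (starRingEnd ℂ) (W ω))) μ := by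
      exact (P8).add (JZW.const_mul _)
    rw [integral_add P8 (JZW.const_mul _),
      integral_add P7 (JZX),
      integral_add P6 (JWZ.const_mul _),
      integral_add P5 (JWX.const_mul _),
      integral_add P4 (JXZ),
      integral_add P3 (JXW.const_mul _),
      integral_add P2 (JZZ),
      integral_add JXX (JWW.const_mul _)]
    rw [integral_const_mul, integral_const_mul, integral_const_mul, integral_const_mul,
      integral_const_mul]
    rw [hXX, hWW, hZZ, z1, z2, z3, z4, z5, z6]
    rw [normsq_c c]
    push_cast
    ring
  · have hpt : ∀ ω, (X ω + c * W ω + Z ω) * (starRingEnd ℂ) (W ω)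
        = X ω * (starRingEnd ℂ) (W ω) + c * (W ω * (starRingEnd ℂ) (W ω))
          + Z ω * (starRingEnd ℂ) (W ω) := by
      intro ω; ring
    rw [integral_congr_ae (Filter.Eventually.of_forall hpt)]
    have P2 : Integrable (fun ω => X ω * (starRingEnd ℂ) (W ω)
        + c * (W ω * (starRingEnd ℂ) (W ω))) μ := by
      exact JXW.add (JWW.const_mul _)
    rw [integral_add P2 JZW, integral_add JXW (JWW.const_mul _), integral_const_mul]
    rw [hWW, z1, z6]
    ring

end Aux

lemma amgm_bound {x rA rB K Q EJ' r : ℝ} (hb : 0 < K) (hQ : 0 < Q)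
    (hre : r ≤ x * rB * (EJ' * rA)) :
    2 * r ≤ x^2 * K * Q + EJ'^2 * (rA^2/Q) * (rB^2/K) := by
  have hD : (EJ'^2 * (rA^2/Q) * (rB^2/K)) * (K*Q) = (EJ' * rA * rB)^2 := by
    field_simp
  nlinarith [sq_nonneg (x*(K*Q) - EJ'*rA*rB), mul_pos hb hQ, hD]

/-- Proposition 1: if `b̂` maximizes `|h_Jᴴ b|²/‖b‖²`, `â` maximizes
`|h_Jᴴ a|²/(aᴴ C_y a)`, and `β̂` is given by the closed-form scaling, then `(β̂, b̂, â)`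
minimizes the mean squared error `E[‖β b (aᴴ y) − h_J s_J‖²]`. -/
theorem stmt4
    {Ω : Type*} [MeasurableSpace Ω] (μ : Measure Ω) [IsProbabilityMeasure μ]
    (B U : ℕ) (hB : 0 < B) (hU : 0 < U)
    (H : Matrix (Fin B) (Fin U) ℂ) (hJ : Fin B → ℂ)
    (Es EJ N0 : ℝ) (hEs : 0 < Es) (hEJ : 0 < EJ) (hN0 : 0 < N0)
    (s : Ω → Fin U → ℂ) (sJ : Ω → ℂ) (n : Ω → Fin B → ℂ)
    (hindep : iIndep
      ![MeasurableSpace.comap s inferInstance,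
        MeasurableSpace.comap sJ inferInstance,
        MeasurableSpace.comap n inferInstance] μ)
    (hs2 : MemLp s 2 μ) (hsJ2 : MemLp sJ 2 μ) (hn2 : MemLp n 2 μ)
    (hsmean : ∀ i, ∫ ω, s ω i ∂μ = 0) (hsJmean : ∫ ω, sJ ω ∂μ = 0)
    (hnmean : ∀ i, ∫ ω, n ω i ∂μ = 0)
    (hscov : ∀ i j, ∫ ω, s ω i * (starRingEnd ℂ) (s ω j) ∂μ = if i = j then (Es : ℂ) else 0)
    (hsJvar : ∫ ω, ‖sJ ω‖ ^ 2 ∂μ = EJ)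
    (hncov : ∀ i j, ∫ ω, n ω i * (starRingEnd ℂ) (n ω j) ∂μ = if i = j then (N0 : ℂ) else 0)
    (y : Ω → Fin B → ℂ) (hy : ∀ ω, y ω = H *ᵥ s ω + sJ ω • hJ + n ω)
    (Cy : Matrix (Fin B) (Fin B) ℂ)
    (hCy : Cy = (Es : ℂ) • (H * Hᴴ) + (EJ : ℂ) • vecMulVec hJ (star hJ)
      + (N0 : ℂ) • (1 : Matrix (Fin B) (Fin B) ℂ))
    (hhJ : hJ ≠ 0)
    (bhat ahat : Fin B → ℂ) (hbhat0 : bhat ≠ 0) (hahat0 : ahat ≠ 0)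
    (hbmax : ∀ b : Fin B → ℂ, b ≠ 0 →
      ‖star hJ ⬝ᵥ b‖ ^ 2 / vecNormSq b ≤ ‖star hJ ⬝ᵥ bhat‖ ^ 2 / vecNormSq bhat)
    (hamax : ∀ a : Fin B → ℂ, a ≠ 0 →
      ‖star hJ ⬝ᵥ a‖ ^ 2 / (star a ⬝ᵥ Cy *ᵥ a).re
        ≤ ‖star hJ ⬝ᵥ ahat‖ ^ 2 / (star ahat ⬝ᵥ Cy *ᵥ ahat).re)
    (βhat : ℂ)
    (hβhat : βhat = (EJ : ℂ) * (star hJ ⬝ᵥ ahat) * (star bhat ⬝ᵥ hJ)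
        / ((vecNormSq bhat : ℂ) * (star ahat ⬝ᵥ Cy *ᵥ ahat))) :
    ∀ (β : ℂ) (a b : Fin B → ℂ),
      ∫ ω, vecNormSq ((βhat * (star ahat ⬝ᵥ y ω)) • bhat - sJ ω • hJ) ∂μ ≤
      ∫ ω, vecNormSq ((β * (star a ⬝ᵥ y ω)) • b - sJ ω • hJ) ∂μ := by
  -- independence of the three sources
  have i01 : IndepFun s sJ μ := by
    have h := hindep.indep (i := 0) (j := 1) (by decide)
    exact h
  have i02 : IndepFun s n μ := by
    have h := hindep.indep (i := 0) (j := 2) (by decide)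
    exact h
  have i12 : IndepFun sJ n μ := by
    have h := hindep.indep (i := 1) (j := 2) (by decide)
    exact h
  -- quadratic form formula
  have hQform : ∀ a : Fin B → ℂ, star a ⬝ᵥ Cy *ᵥ a
      = ((Es * vecNormSq (star a ᵥ* H) + EJ * ‖star a ⬝ᵥ hJ‖^2 + N0 * vecNormSq a : ℝ) : ℂ) := by
    intro a
    rw [hCy]
    rw [Matrix.add_mulVec, Matrix.add_mulVec, dotProduct_add, dotProduct_add]
    rw [Matrix.smul_mulVec, Matrix.smul_mulVec, Matrix.smul_mulVec]
    rw [dotProduct_smul, dotProduct_smul, dotProduct_smul]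
    have t1 : star a ⬝ᵥ ((H * Hᴴ) *ᵥ a) = ((vecNormSq (star a ᵥ* H) : ℝ) : ℂ) := by
      rw [← Matrix.mulVec_mulVec, dotProduct_mulVec]
      have : Hᴴ *ᵥ a = star (star a ᵥ* H) := by
        rw [Matrix.star_vecMul]
        simp
      rw [this, dot_self_star]
    have t2 : star a ⬝ᵥ (vecMulVec hJ (star hJ) *ᵥ a) = ((‖star a ⬝ᵥ hJ‖^2 : ℝ) : ℂ) := by
      have h1 : vecMulVec hJ (star hJ) *ᵥ a = (star hJ ⬝ᵥ a) • hJ := by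
        funext i
        simp only [mulVec, dotProduct, vecMulVec_apply, Pi.smul_apply, smul_eq_mul,
          Finset.sum_mul]
        exact Finset.sum_congr rfl fun k _ => by ring
      rw [h1, dotProduct_smul, smul_eq_mul, ← conj_dot a hJ, mul_comm, normsq_c]
    have t3 : star a ⬝ᵥ ((1 : Matrix (Fin B) (Fin B) ℂ) *ᵥ a) = ((vecNormSq a : ℝ) : ℂ) := by
      rw [Matrix.one_mulVec, star_dot_self]
    rw [t1, t2, t3]
    push_cast
    simp only [smul_eq_mul]
    try ring
  have hconjSq : ∀ v : Fin B → ℂ, vecNormSq (star v) = vecNormSq v := by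
    intro v
    unfold vecNormSq
    exact Finset.sum_congr rfl fun i _ => by simp
  have hWW : ∫ ω, sJ ω * (starRingEnd ℂ) (sJ ω) ∂μ = ((EJ:ℝ):ℂ) := by
    have hint := mulL1 hsJ2 (conjL2 hsJ2)
    apply Complex.ext
    · rw [creint hint, Complex.ofReal_re, ← hsJvar]
      refine integral_congr_ae (Filter.Eventually.of_forall fun ω => ?_)
      dsimp only
      rw [normsq_c]
      exact Complex.ofReal_re _
    · rw [cimint hint, Complex.ofReal_im]
      rw [integral_congr_ae (g := fun _ => (0:ℝ))
        (Filter.Eventually.of_forall fun ω => by dsimp only; rw [normsq_c]; exact Complex.ofReal_im _)]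
      simp
  -- the closed-form MSE
  have key : ∀ (β : ℂ) (a b : Fin B → ℂ),
      (∫ ω, vecNormSq ((β * (star a ⬝ᵥ y ω)) • b - sJ ω • hJ) ∂μ)
        = ‖β‖^2 * vecNormSq b * (star a ⬝ᵥ Cy *ᵥ a).re + EJ * vecNormSq hJ
          - 2 * ((β * (star hJ ⬝ᵥ b)) * ((EJ : ℂ) * (star a ⬝ᵥ hJ))).re := by
    intro β a b
    have hXX : ∫ ω, (∑ j, (star a ᵥ* H) j * s ω j)
        * (starRingEnd ℂ) (∑ j, (star a ᵥ* H) j * s ω j) ∂μ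
        = ((Es * vecNormSq (star a ᵥ* H) : ℝ) : ℂ) := sum_covar hs2 hscov _
    have hZZ : ∫ ω, (∑ i, star a i * n ω i)
        * (starRingEnd ℂ) (∑ i, star a i * n ω i) ∂μ
        = ((N0 * vecNormSq a : ℝ) : ℂ) := by
      rw [sum_covar hn2 hncov (star a)]
      norm_cast
      rw [show (∑ j, ‖star a j‖^2) = vecNormSq a from hconjSq a]
    have hX0 : ∫ ω, ∑ j, (star a ᵥ* H) j * s ω j ∂μ = 0 := sum_int_zero hs2 hsmean _
    have hZ0 : ∫ ω, ∑ i, star a i * n ω i ∂μ = 0 := sum_int_zero hn2 hnmean _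
    have mX : MemLp (fun ω => ∑ j, (star a ᵥ* H) j * s ω j) 2 μ := sumL2 hs2 _
    have mZ : MemLp (fun ω => ∑ i, star a i * n ω i) 2 μ := sumL2 hn2 _
    have iXW : IndepFun (fun ω => ∑ j, (star a ᵥ* H) j * s ω j) sJ μ :=
      i01.comp (meas_sum _) measurable_id
    have iXZ : IndepFun (fun ω => ∑ j, (star a ᵥ* H) j * s ω j)
        (fun ω => ∑ i, star a i * n ω i) μ := i02.comp (meas_sum _) (meas_sum _)
    have iWZ : IndepFun sJ (fun ω => ∑ i, star a i * n ω i) μ :=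
      i12.comp measurable_id (meas_sum _)
    obtain ⟨huu, husJ⟩ := triple_moments _ sJ _ (star a ⬝ᵥ hJ) mX hsJ2 mZ iXW iXZ iWZ
      hX0 hZ0 hXX hWW hZZ
    -- the full received scalar
    have hUeq : ∀ ω, star a ⬝ᵥ y ω
        = (∑ j, (star a ᵥ* H) j * s ω j) + (star a ⬝ᵥ hJ) * sJ ω
          + (∑ i, star a i * n ω i) := by
      intro ω
      rw [hy ω, dotProduct_add, dotProduct_add, dotProduct_mulVec, dotProduct_smul,
        smul_eq_mul, mul_comm (sJ ω) _]
      rfl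
    have mU : MemLp (fun ω => (∑ j, (star a ᵥ* H) j * s ω j) + (star a ⬝ᵥ hJ) * sJ ω
        + (∑ i, star a i * n ω i)) 2 μ := by
      exact (mX.add (hsJ2.const_mul _)).add mZ
    have iUU : Integrable (fun ω =>
        ((∑ j, (star a ᵥ* H) j * s ω j) + (star a ⬝ᵥ hJ) * sJ ω + (∑ i, star a i * n ω i))
        * (starRingEnd ℂ) ((∑ j, (star a ᵥ* H) j * s ω j) + (star a ⬝ᵥ hJ) * sJ ω
          + (∑ i, star a i * n ω i))) μ := mulL1 mU (conjL2 mU)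
    have iUW : Integrable (fun ω =>
        ((∑ j, (star a ᵥ* H) j * s ω j) + (star a ⬝ᵥ hJ) * sJ ω + (∑ i, star a i * n ω i))
        * (starRingEnd ℂ) (sJ ω)) μ := mulL1 mU (conjL2 hsJ2)
    -- second moment of U equals the quadratic form
    have huuC : ∫ ω, ((∑ j, (star a ᵥ* H) j * s ω j) + (star a ⬝ᵥ hJ) * sJ ω
          + (∑ i, star a i * n ω i))
        * (starRingEnd ℂ) ((∑ j, (star a ᵥ* H) j * s ω j) + (star a ⬝ᵥ hJ) * sJ ω
          + (∑ i, star a i * n ω i)) ∂μ = star a ⬝ᵥ Cy *ᵥ a := by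
      rw [huu, hQform a]
      norm_cast
      ring
    have hUsq : ∫ ω, ‖(∑ j, (star a ᵥ* H) j * s ω j) + (star a ⬝ᵥ hJ) * sJ ω
        + (∑ i, star a i * n ω i)‖^2 ∂μ = (star a ⬝ᵥ Cy *ᵥ a).re := by
      rw [← huuC, creint iUU]
      refine integral_congr_ae (Filter.Eventually.of_forall fun ω => ?_)
      dsimp only
      rw [normsq_c]
      exact (Complex.ofReal_re _).symm
    -- pointwise expansion of the error norm
    have hpt : ∀ ω, vecNormSq ((β * (star a ⬝ᵥ y ω)) • b - sJ ω • hJ)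
        = (‖β‖^2 * vecNormSq b) * ‖(∑ j, (star a ᵥ* H) j * s ω j) + (star a ⬝ᵥ hJ) * sJ ω
            + (∑ i, star a i * n ω i)‖^2
          + vecNormSq hJ * ‖sJ ω‖^2
          - 2 * ((β * (star hJ ⬝ᵥ b)) * (((∑ j, (star a ᵥ* H) j * s ω j)
              + (star a ⬝ᵥ hJ) * sJ ω + (∑ i, star a i * n ω i))
              * (starRingEnd ℂ) (sJ ω))).re := by
      intro ω
      rw [hUeq ω, expand_pt, norm_mul, mul_pow]
      have harg : (β * ((∑ j, (star a ᵥ* H) j * s ω j) + (star a ⬝ᵥ hJ) * sJ ω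
            + (∑ i, star a i * n ω i))) * (starRingEnd ℂ) (sJ ω) * (star hJ ⬝ᵥ b)
          = (β * (star hJ ⬝ᵥ b)) * (((∑ j, (star a ᵥ* H) j * s ω j)
            + (star a ⬝ᵥ hJ) * sJ ω + (∑ i, star a i * n ω i))
            * (starRingEnd ℂ) (sJ ω)) := by ring
      rw [harg]
      ring
    have iA : Integrable (fun ω => ‖(∑ j, (star a ᵥ* H) j * s ω j) + (star a ⬝ᵥ hJ) * sJ ω
        + (∑ i, star a i * n ω i)‖^2) μ :=
      (memLp_two_iff_integrable_sq_norm mU.aestronglyMeasurable).mp mU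
    have iB : Integrable (fun ω => ‖sJ ω‖^2) μ :=
      (memLp_two_iff_integrable_sq_norm hsJ2.aestronglyMeasurable).mp hsJ2
    have iC : Integrable (fun ω => ((β * (star hJ ⬝ᵥ b)) * (((∑ j, (star a ᵥ* H) j * s ω j)
        + (star a ⬝ᵥ hJ) * sJ ω + (∑ i, star a i * n ω i))
        * (starRingEnd ℂ) (sJ ω))).re) μ := (iUW.const_mul _).re
    rw [integral_congr_ae (Filter.Eventually.of_forall hpt)]
    have P1 : Integrable (fun ω => (‖β‖^2 * vecNormSq b)
        * ‖(∑ j, (star a ᵥ* H) j * s ω j) + (star a ⬝ᵥ hJ) * sJ ω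
          + (∑ i, star a i * n ω i)‖^2 + vecNormSq hJ * ‖sJ ω‖^2) μ := by
      exact (iA.const_mul _).add (iB.const_mul _)
    rw [integral_sub P1 (iC.const_mul 2), integral_add (iA.const_mul _) (iB.const_mul _),
      integral_const_mul, integral_const_mul, integral_const_mul, hUsq, hsJvar]
    have hcross : ∫ ω, ((β * (star hJ ⬝ᵥ b)) * (((∑ j, (star a ᵥ* H) j * s ω j)
        + (star a ⬝ᵥ hJ) * sJ ω + (∑ i, star a i * n ω i))
        * (starRingEnd ℂ) (sJ ω))).re ∂μ
        = ((β * (star hJ ⬝ᵥ b)) * ((EJ : ℂ) * (star a ⬝ᵥ hJ))).re := by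
      rw [← creint (iUW.const_mul _), integral_const_mul, husJ]
      congr 1
      push_cast
      ring
    rw [hcross]
    ring
  -- basic facts about the quadratic form
  have hQff : ∀ v : Fin B → ℂ, (star v ⬝ᵥ Cy *ᵥ v).re
      = Es * vecNormSq (star v ᵥ* H) + EJ * ‖star v ⬝ᵥ hJ‖^2 + N0 * vecNormSq v := by
    intro v; rw [hQform v, Complex.ofReal_re]
  have hQnn : ∀ v : Fin B → ℂ, 0 ≤ (star v ⬝ᵥ Cy *ᵥ v).re := by
    intro v; rw [hQff]
    have h1 := vecNormSq_nonneg (star v ᵥ* H)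
    have h2 := vecNormSq_nonneg v
    have h3 := sq_nonneg ‖star v ⬝ᵥ hJ‖
    nlinarith
  have hQpos : ∀ v : Fin B → ℂ, v ≠ 0 → 0 < (star v ⬝ᵥ Cy *ᵥ v).re := by
    intro v hv; rw [hQff]
    have h1 := mul_nonneg hEs.le (vecNormSq_nonneg (star v ᵥ* H))
    have h2 := mul_nonneg hEJ.le (sq_nonneg ‖star v ⬝ᵥ hJ‖)
    have h3 := mul_pos hN0 (vecNormSq_pos hv)
    linarith
  have hQzero : ∀ v : Fin B → ℂ, (star v ⬝ᵥ Cy *ᵥ v).re = 0 → star v ⬝ᵥ hJ = 0 := by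
    intro v h; rw [hQff] at h
    have h1 := mul_nonneg hEs.le (vecNormSq_nonneg (star v ᵥ* H))
    have h3 := mul_nonneg hN0.le (vecNormSq_nonneg v)
    have h4 : ‖star v ⬝ᵥ hJ‖^2 = 0 := by nlinarith [sq_nonneg ‖star v ⬝ᵥ hJ‖]
    have h5 : ‖star v ⬝ᵥ hJ‖ = 0 := by
      have := sq_nonneg ‖star v ⬝ᵥ hJ‖
      nlinarith [norm_nonneg (star v ⬝ᵥ hJ)]
    exact norm_eq_zero.mp h5
  have hnormdot : ∀ v : Fin B → ℂ, ‖star v ⬝ᵥ hJ‖ = ‖star hJ ⬝ᵥ v‖ := by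
    intro v
    rw [← conj_dot hJ v, starRingEnd_apply]
    exact norm_star _
  intro β a b
  rw [key βhat ahat bhat, key β a b]
  have hKb : 0 < vecNormSq bhat := vecNormSq_pos hbhat0
  have hQh : 0 < (star ahat ⬝ᵥ Cy *ᵥ ahat).re := hQpos ahat hahat0
  have hQhc : star ahat ⬝ᵥ Cy *ᵥ ahat = (((star ahat ⬝ᵥ Cy *ᵥ ahat).re : ℝ) : ℂ) := by
    conv_lhs => rw [hQform ahat]
    rw [hQff ahat]
  -- closed form for βhat
  have hβ2 : βhat = (starRingEnd ℂ) ((EJ : ℂ) * (star ahat ⬝ᵥ hJ) * (star hJ ⬝ᵥ bhat))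
      / (((vecNormSq bhat * (star ahat ⬝ᵥ Cy *ᵥ ahat).re : ℝ)) : ℂ) := by
    rw [hβhat]
    congr 1
    · rw [_root_.map_mul, _root_.map_mul, Complex.conj_ofReal, conj_dot, conj_dot]
    · conv_lhs => rw [hQhc]
      push_cast
      ring
  have hnormL : ‖(EJ : ℂ) * (star ahat ⬝ᵥ hJ) * (star hJ ⬝ᵥ bhat)‖^2
      = EJ^2 * ‖star hJ ⬝ᵥ ahat‖^2 * ‖star hJ ⬝ᵥ bhat‖^2 := by
    rw [norm_mul, norm_mul, Complex.norm_real, Real.norm_eq_abs, abs_of_pos hEJ,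
      hnormdot ahat]
    ring
  have hKpos : 0 < vecNormSq bhat * (star ahat ⬝ᵥ Cy *ᵥ ahat).re := mul_pos hKb hQh
  have hnb : ‖βhat‖^2 = ‖(EJ : ℂ) * (star ahat ⬝ᵥ hJ) * (star hJ ⬝ᵥ bhat)‖^2
      / (vecNormSq bhat * (star ahat ⬝ᵥ Cy *ᵥ ahat).re)^2 := by
    rw [hβ2, norm_div, RCLike.norm_conj, Complex.norm_real, Real.norm_eq_abs,
      abs_of_pos hKpos, div_pow]
  have hcr : ((βhat * (star hJ ⬝ᵥ bhat)) * ((EJ : ℂ) * (star ahat ⬝ᵥ hJ))).re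
      = ‖(EJ : ℂ) * (star ahat ⬝ᵥ hJ) * (star hJ ⬝ᵥ bhat)‖^2
        / (vecNormSq bhat * (star ahat ⬝ᵥ Cy *ᵥ ahat).re) := by
    rw [hβ2]
    have harg : ((starRingEnd ℂ) ((EJ : ℂ) * (star ahat ⬝ᵥ hJ) * (star hJ ⬝ᵥ bhat))
          / (((vecNormSq bhat * (star ahat ⬝ᵥ Cy *ᵥ ahat).re : ℝ)) : ℂ)
          * (star hJ ⬝ᵥ bhat)) * ((EJ : ℂ) * (star ahat ⬝ᵥ hJ))
        = ((‖(EJ : ℂ) * (star ahat ⬝ᵥ hJ) * (star hJ ⬝ᵥ bhat)‖^2 : ℝ) : ℂ)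
          / (((vecNormSq bhat * (star ahat ⬝ᵥ Cy *ᵥ ahat).re : ℝ)) : ℂ) := by
      rw [div_mul_eq_mul_div, div_mul_eq_mul_div]
      congr 1
      have : (starRingEnd ℂ) ((EJ : ℂ) * (star ahat ⬝ᵥ hJ) * (star hJ ⬝ᵥ bhat))
            * (star hJ ⬝ᵥ bhat) * ((EJ : ℂ) * (star ahat ⬝ᵥ hJ))
          = ((EJ : ℂ) * (star ahat ⬝ᵥ hJ) * (star hJ ⬝ᵥ bhat))
            * (starRingEnd ℂ) ((EJ : ℂ) * (star ahat ⬝ᵥ hJ) * (star hJ ⬝ᵥ bhat)) := by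
        ring
      rw [this, normsq_c]
    rw [harg, ← Complex.ofReal_div, Complex.ofReal_re]
  -- value of the LHS
  have hLHS : ‖βhat‖^2 * vecNormSq bhat * (star ahat ⬝ᵥ Cy *ᵥ ahat).re
        + EJ * vecNormSq hJ
        - 2 * ((βhat * (star hJ ⬝ᵥ bhat)) * ((EJ : ℂ) * (star ahat ⬝ᵥ hJ))).re
      = EJ * vecNormSq hJ
        - EJ^2 * (‖star hJ ⬝ᵥ ahat‖^2 / (star ahat ⬝ᵥ Cy *ᵥ ahat).re)
          * (‖star hJ ⬝ᵥ bhat‖^2 / vecNormSq bhat) := by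
    rw [hnb, hcr, hnormL]
    field_simp
    ring
  rw [hLHS]
  -- comparison of the ratio products
  have hρah : 0 ≤ ‖star hJ ⬝ᵥ ahat‖^2 / (star ahat ⬝ᵥ Cy *ᵥ ahat).re :=
    div_nonneg (sq_nonneg _) hQh.le
  have hρbh : 0 ≤ ‖star hJ ⬝ᵥ bhat‖^2 / vecNormSq bhat :=
    div_nonneg (sq_nonneg _) hKb.le
  have hρa : ‖star hJ ⬝ᵥ a‖^2 / (star a ⬝ᵥ Cy *ᵥ a).re
      ≤ ‖star hJ ⬝ᵥ ahat‖^2 / (star ahat ⬝ᵥ Cy *ᵥ ahat).re := by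
    by_cases ha0 : a = 0
    · have h1 : star hJ ⬝ᵥ a = 0 := by rw [ha0]; exact dotProduct_zero _
      rw [h1, norm_zero]
      rw [zero_pow two_ne_zero, zero_div]
      exact hρah
    · exact hamax a ha0
  have hρb : ‖star hJ ⬝ᵥ b‖^2 / vecNormSq b
      ≤ ‖star hJ ⬝ᵥ bhat‖^2 / vecNormSq bhat := by
    by_cases hb0 : b = 0
    · have h1 : star hJ ⬝ᵥ b = 0 := by rw [hb0]; exact dotProduct_zero _
      rw [h1, norm_zero]
      rw [zero_pow two_ne_zero, zero_div]
      exact hρbh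
    · exact hbmax b hb0
  have hρanonneg : 0 ≤ ‖star hJ ⬝ᵥ a‖^2 / (star a ⬝ᵥ Cy *ᵥ a).re :=
    div_nonneg (sq_nonneg _) (hQnn a)
  have hρbnonneg : 0 ≤ ‖star hJ ⬝ᵥ b‖^2 / vecNormSq b :=
    div_nonneg (sq_nonneg _) (vecNormSq_nonneg b)
  have hprod : EJ^2 * (‖star hJ ⬝ᵥ a‖^2 / (star a ⬝ᵥ Cy *ᵥ a).re)
        * (‖star hJ ⬝ᵥ b‖^2 / vecNormSq b)
      ≤ EJ^2 * (‖star hJ ⬝ᵥ ahat‖^2 / (star ahat ⬝ᵥ Cy *ᵥ ahat).re)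
        * (‖star hJ ⬝ᵥ bhat‖^2 / vecNormSq bhat) := by
    have h1 : 0 ≤ EJ^2 := sq_nonneg EJ
    gcongr
  -- RHS lower bound
  have hmain : 2 * ((β * (star hJ ⬝ᵥ b)) * ((EJ : ℂ) * (star a ⬝ᵥ hJ))).re
      ≤ ‖β‖^2 * vecNormSq b * (star a ⬝ᵥ Cy *ᵥ a).re
        + EJ^2 * (‖star hJ ⬝ᵥ a‖^2 / (star a ⬝ᵥ Cy *ᵥ a).re)
          * (‖star hJ ⬝ᵥ b‖^2 / vecNormSq b) := by
    have hre : ((β * (star hJ ⬝ᵥ b)) * ((EJ : ℂ) * (star a ⬝ᵥ hJ))).re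
        ≤ ‖β‖ * ‖star hJ ⬝ᵥ b‖ * (EJ * ‖star hJ ⬝ᵥ a‖) := by
      calc ((β * (star hJ ⬝ᵥ b)) * ((EJ : ℂ) * (star a ⬝ᵥ hJ))).re
          ≤ ‖(β * (star hJ ⬝ᵥ b)) * ((EJ : ℂ) * (star a ⬝ᵥ hJ))‖ := by
            exact Complex.re_le_norm _
        _ = ‖β‖ * ‖star hJ ⬝ᵥ b‖ * (EJ * ‖star hJ ⬝ᵥ a‖) := by
            rw [norm_mul, norm_mul, norm_mul, Complex.norm_real, Real.norm_eq_abs,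
              abs_of_pos hEJ, hnormdot a]
    by_cases hb0 : vecNormSq b = 0
    · have hb' : b = 0 := vecNormSq_eq_zero hb0
      have hrb : star hJ ⬝ᵥ b = 0 := by rw [hb']; exact dotProduct_zero _
      rw [hrb, hb0]
      simp
    · have hbpos : 0 < vecNormSq b := lt_of_le_of_ne (vecNormSq_nonneg b) (Ne.symm hb0)
      by_cases hQ0 : (star a ⬝ᵥ Cy *ᵥ a).re = 0
      · have hca : star a ⬝ᵥ hJ = 0 := hQzero a hQ0
        have hra : star hJ ⬝ᵥ a = 0 := by
          rw [← conj_dot a hJ, hca, map_zero]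
        rw [hca, hQ0, hra]
        simp
      · have hQapos : 0 < (star a ⬝ᵥ Cy *ᵥ a).re :=
          lt_of_le_of_ne (hQnn a) (Ne.symm hQ0)
        exact amgm_bound hbpos hQapos hre
  linarith [hprod, hmain]
end

section
/- Under the uplink model, for every matrix P ∈ ℂ^{B×B}, the mean squared error between the transformed receive signal and the jammer-free signal admits the deterministic decomposition E[‖P y − (H s + n)‖²] = trace( (P − I_B) A (P − I_B)ᴴ ) + E_J ‖P h_J‖², where A := E_s H Hᴴ + N_0 I_B (and the trace is a nonnegative real number). -/
open MeasureTheory ProbabilityTheory Matrix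
open scoped ComplexOrder

namespace Stmt10Aux

variable {Ω : Type*} [MeasurableSpace Ω] {μ : Measure Ω}

lemma memLp_conj {f : Ω → ℂ} {p : ENNReal} (hf : MemLp f p μ) :
    MemLp (fun ω => (starRingEnd ℂ) (f ω)) p μ :=
  Complex.isometry_conj.lipschitz.comp_memLp (map_zero _) hf

lemma integrable_mul_L2 {f g : Ω → ℂ} (hf : MemLp f 2 μ) (hg : MemLp g 2 μ) :
    Integrable (fun ω => f ω * g ω) μ := by
  have h : MemLp (f • g) 1 μ := hg.smul hf
  exact memLp_one_iff_integrable.mp h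

lemma indep_integral_mul {X Y : Ω → ℂ} (h : IndepFun X Y μ)
    (hX : Integrable X μ) (hY : Integrable Y μ) :
    ∫ ω, X ω * Y ω ∂μ = (∫ ω, X ω ∂μ) * ∫ ω, Y ω ∂μ := by
  have hre : Measurable Complex.re := Complex.measurable_re
  have him : Measurable Complex.im := Complex.measurable_im
  have hXre : Integrable (fun ω => (X ω).re) μ := by simpa using hX.re
  have hXim : Integrable (fun ω => (X ω).im) μ := by simpa using hX.im
  have hYre : Integrable (fun ω => (Y ω).re) μ := by simpa using hY.re
  have hYim : Integrable (fun ω => (Y ω).im) μ := by simpa using hY.im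
  have iRR : ∫ ω, (X ω).re * (Y ω).re ∂μ = (∫ ω, (X ω).re ∂μ) * ∫ ω, (Y ω).re ∂μ := by
    simpa [Pi.mul_def, Function.comp_def] using
      (h.comp hre hre).integral_fun_mul_eq_mul_integral hXre.aestronglyMeasurable hYre.aestronglyMeasurable
  have iRI : ∫ ω, (X ω).re * (Y ω).im ∂μ = (∫ ω, (X ω).re ∂μ) * ∫ ω, (Y ω).im ∂μ := by
    simpa [Pi.mul_def, Function.comp_def] using
      (h.comp hre him).integral_fun_mul_eq_mul_integral hXre.aestronglyMeasurable hYim.aestronglyMeasurable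
  have iIR : ∫ ω, (X ω).im * (Y ω).re ∂μ = (∫ ω, (X ω).im ∂μ) * ∫ ω, (Y ω).re ∂μ := by
    simpa [Pi.mul_def, Function.comp_def] using
      (h.comp him hre).integral_fun_mul_eq_mul_integral hXim.aestronglyMeasurable hYre.aestronglyMeasurable
  have iII : ∫ ω, (X ω).im * (Y ω).im ∂μ = (∫ ω, (X ω).im ∂μ) * ∫ ω, (Y ω).im ∂μ := by
    simpa [Pi.mul_def, Function.comp_def] using
      (h.comp him him).integral_fun_mul_eq_mul_integral hXim.aestronglyMeasurable hYim.aestronglyMeasurable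
  have hRR : Integrable (fun ω => (X ω).re * (Y ω).re) μ :=
    (h.comp hre hre).integrable_mul hXre hYre
  have hRI : Integrable (fun ω => (X ω).re * (Y ω).im) μ :=
    (h.comp hre him).integrable_mul hXre hYim
  have hIR : Integrable (fun ω => (X ω).im * (Y ω).re) μ :=
    (h.comp him hre).integrable_mul hXim hYre
  have hII : Integrable (fun ω => (X ω).im * (Y ω).im) μ :=
    (h.comp him him).integrable_mul hXim hYim
  have hXY : Integrable (fun ω => X ω * Y ω) μ := h.integrable_mul hX hY
  apply Complex.ext
  · have h1 : (∫ ω, X ω * Y ω ∂μ).re = ∫ ω, (X ω * Y ω).re ∂μ := by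
      simpa using (integral_re hXY).symm
    rw [h1]
    have h2 : ∀ ω, (X ω * Y ω).re = (X ω).re * (Y ω).re - (X ω).im * (Y ω).im :=
      fun ω => Complex.mul_re _ _
    rw [integral_congr_ae (Filter.Eventually.of_forall h2), integral_sub hRR hII, iRR, iII,
      Complex.mul_re]
    have e1 : (∫ ω, X ω ∂μ).re = ∫ ω, (X ω).re ∂μ := by simpa using (integral_re hX).symm
    have e2 : (∫ ω, X ω ∂μ).im = ∫ ω, (X ω).im ∂μ := by simpa using (integral_im hX).symm
    have e3 : (∫ ω, Y ω ∂μ).re = ∫ ω, (Y ω).re ∂μ := by simpa using (integral_re hY).symm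
    have e4 : (∫ ω, Y ω ∂μ).im = ∫ ω, (Y ω).im ∂μ := by simpa using (integral_im hY).symm
    rw [e1, e2, e3, e4]
  · have h1 : (∫ ω, X ω * Y ω ∂μ).im = ∫ ω, (X ω * Y ω).im ∂μ := by
      simpa using (integral_im hXY).symm
    rw [h1]
    have h2 : ∀ ω, (X ω * Y ω).im = (X ω).re * (Y ω).im + (X ω).im * (Y ω).re :=
      fun ω => Complex.mul_im _ _
    rw [integral_congr_ae (Filter.Eventually.of_forall h2), integral_add hRI hIR, iRI, iIR,
      Complex.mul_im]
    have e1 : (∫ ω, X ω ∂μ).re = ∫ ω, (X ω).re ∂μ := by simpa using (integral_re hX).symm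
    have e2 : (∫ ω, X ω ∂μ).im = ∫ ω, (X ω).im ∂μ := by simpa using (integral_im hX).symm
    have e3 : (∫ ω, Y ω ∂μ).re = ∫ ω, (Y ω).re ∂μ := by simpa using (integral_re hY).symm
    have e4 : (∫ ω, Y ω ∂μ).im = ∫ ω, (Y ω).im ∂μ := by simpa using (integral_im hY).symm
    rw [e1, e2, e3, e4]

lemma cross_zero {X Y : Ω → ℂ} (h : IndepFun X Y μ)
    (hX : Integrable X μ) (hY : Integrable Y μ) (hXm : ∫ ω, X ω ∂μ = 0) :
    ∫ ω, X ω * Y ω ∂μ = 0 := by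
  rw [indep_integral_mul h hX hY, hXm, zero_mul]

lemma sum_mul_conj_integral {ι κ : Type*} [Fintype ι] [Fintype κ]
    (av : ι → ℂ) (bv : κ → ℂ) (f : Ω → ι → ℂ) (g : Ω → κ → ℂ)
    (hint : ∀ u v, Integrable (fun ω => f ω u * (starRingEnd ℂ) (g ω v)) μ) :
    ∫ ω, (∑ u, av u * f ω u) * (starRingEnd ℂ) (∑ v, bv v * g ω v) ∂μ
      = ∑ u, ∑ v, (av u * (starRingEnd ℂ) (bv v)) *
          ∫ ω, f ω u * (starRingEnd ℂ) (g ω v) ∂μ := by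
  have hpt : ∀ ω, (∑ u, av u * f ω u) * (starRingEnd ℂ) (∑ v, bv v * g ω v)
      = ∑ u, ∑ v, (av u * (starRingEnd ℂ) (bv v)) * (f ω u * (starRingEnd ℂ) (g ω v)) := by
    intro ω
    rw [map_sum, Finset.sum_mul_sum]
    refine Finset.sum_congr rfl fun u _ => Finset.sum_congr rfl fun v _ => ?_
    rw [_root_.map_mul]; ring
  rw [integral_congr_ae (Filter.Eventually.of_forall hpt),
    integral_finset_sum _ (fun u _ =>
      integrable_finset_sum _ (fun v _ => ((hint u v).const_mul _)))]
  refine Finset.sum_congr rfl fun u _ => ?_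
  rw [integral_finset_sum _ (fun v _ => (hint u v).const_mul _)]
  exact Finset.sum_congr rfl fun v _ => integral_const_mul _ _

lemma mul_conj_norm (z : ℂ) : z * (starRingEnd ℂ) z = ((‖z‖ ^ 2 : ℝ) : ℂ) := by
  rw [Complex.sq_norm]
  exact Complex.mul_conj _

lemma trace_mul_conjTranspose_self {m n : Type*} [Fintype m] [Fintype n]
    (M : Matrix m n ℂ) :
    (M * Mᴴ).trace = ((∑ i, ∑ j, ‖M i j‖ ^ 2 : ℝ) : ℂ) := by
  have key : ∀ (i : m) (j : n), M i j * star (M i j) = ((‖M i j‖ ^ 2 : ℝ) : ℂ) :=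
    fun i j => mul_conj_norm _
  simp only [Matrix.trace, Matrix.diag, Matrix.mul_apply, Matrix.conjTranspose_apply, key]
  push_cast
  rfl

lemma norm_sq_integral_three {F1 F2 F3 : Ω → ℂ} {r1 r2 r3 : ℝ}
    (h1 : MemLp F1 2 μ) (h2 : MemLp F2 2 μ) (h3 : MemLp F3 2 μ)
    (I11 : ∫ ω, F1 ω * (starRingEnd ℂ) (F1 ω) ∂μ = ((r1 : ℝ) : ℂ))
    (I22 : ∫ ω, F2 ω * (starRingEnd ℂ) (F2 ω) ∂μ = ((r2 : ℝ) : ℂ))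
    (I33 : ∫ ω, F3 ω * (starRingEnd ℂ) (F3 ω) ∂μ = ((r3 : ℝ) : ℂ))
    (I12 : ∫ ω, F1 ω * (starRingEnd ℂ) (F2 ω) ∂μ = 0)
    (I13 : ∫ ω, F1 ω * (starRingEnd ℂ) (F3 ω) ∂μ = 0)
    (I21 : ∫ ω, F2 ω * (starRingEnd ℂ) (F1 ω) ∂μ = 0)
    (I23 : ∫ ω, F2 ω * (starRingEnd ℂ) (F3 ω) ∂μ = 0)
    (I31 : ∫ ω, F3 ω * (starRingEnd ℂ) (F1 ω) ∂μ = 0)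
    (I32 : ∫ ω, F3 ω * (starRingEnd ℂ) (F2 ω) ∂μ = 0) :
    Integrable (fun ω => ‖F1 ω + F2 ω + F3 ω‖ ^ 2) μ ∧
    ∫ ω, ‖F1 ω + F2 ω + F3 ω‖ ^ 2 ∂μ = r1 + r2 + r3 := by
  have hF : MemLp (fun ω => F1 ω + F2 ω + F3 ω) 2 μ := (h1.add h2).add h3
  have hFF : Integrable (fun ω => (F1 ω + F2 ω + F3 ω) *
      (starRingEnd ℂ) (F1 ω + F2 ω + F3 ω)) μ :=
    integrable_mul_L2 hF (memLp_conj hF)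
  have p : ∀ (f g : Ω → ℂ), MemLp f 2 μ → MemLp g 2 μ →
      Integrable (fun ω => f ω * (starRingEnd ℂ) (g ω)) μ := fun f g hf hg =>
    integrable_mul_L2 hf (memLp_conj hg)
  have p11 : Integrable (fun ω => F1 ω * (starRingEnd ℂ) (F1 ω)) μ := p _ _ h1 h1
  have p12 : Integrable (fun ω => F1 ω * (starRingEnd ℂ) (F2 ω)) μ := p _ _ h1 h2
  have p13 : Integrable (fun ω => F1 ω * (starRingEnd ℂ) (F3 ω)) μ := p _ _ h1 h3
  have p21 : Integrable (fun ω => F2 ω * (starRingEnd ℂ) (F1 ω)) μ := p _ _ h2 h1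
  have p22 : Integrable (fun ω => F2 ω * (starRingEnd ℂ) (F2 ω)) μ := p _ _ h2 h2
  have p23 : Integrable (fun ω => F2 ω * (starRingEnd ℂ) (F3 ω)) μ := p _ _ h2 h3
  have p31 : Integrable (fun ω => F3 ω * (starRingEnd ℂ) (F1 ω)) μ := p _ _ h3 h1
  have p32 : Integrable (fun ω => F3 ω * (starRingEnd ℂ) (F2 ω)) μ := p _ _ h3 h2
  have p33 : Integrable (fun ω => F3 ω * (starRingEnd ℂ) (F3 ω)) μ := p _ _ h3 h3
  have s1 : Integrable (fun ω => F1 ω * (starRingEnd ℂ) (F1 ω)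
      + F1 ω * (starRingEnd ℂ) (F2 ω)) μ := p11.add p12
  have r1s : Integrable (fun ω => F1 ω * (starRingEnd ℂ) (F1 ω)
      + F1 ω * (starRingEnd ℂ) (F2 ω) + F1 ω * (starRingEnd ℂ) (F3 ω)) μ := s1.add p13
  have s4 : Integrable (fun ω => F2 ω * (starRingEnd ℂ) (F1 ω)
      + F2 ω * (starRingEnd ℂ) (F2 ω)) μ := p21.add p22
  have r2s : Integrable (fun ω => F2 ω * (starRingEnd ℂ) (F1 ω)
      + F2 ω * (starRingEnd ℂ) (F2 ω) + F2 ω * (starRingEnd ℂ) (F3 ω)) μ := s4.add p23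
  have s7 : Integrable (fun ω => F3 ω * (starRingEnd ℂ) (F1 ω)
      + F3 ω * (starRingEnd ℂ) (F2 ω)) μ := p31.add p32
  have r3s : Integrable (fun ω => F3 ω * (starRingEnd ℂ) (F1 ω)
      + F3 ω * (starRingEnd ℂ) (F2 ω) + F3 ω * (starRingEnd ℂ) (F3 ω)) μ := s7.add p33
  have r12s : Integrable (fun ω =>
      (F1 ω * (starRingEnd ℂ) (F1 ω) + F1 ω * (starRingEnd ℂ) (F2 ω)
        + F1 ω * (starRingEnd ℂ) (F3 ω))
      + (F2 ω * (starRingEnd ℂ) (F1 ω) + F2 ω * (starRingEnd ℂ) (F2 ω)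
        + F2 ω * (starRingEnd ℂ) (F3 ω))) μ := r1s.add r2s
  have hpt : ∀ ω, (‖F1 ω + F2 ω + F3 ω‖ ^ 2 : ℝ)
      = ((F1 ω + F2 ω + F3 ω) * (starRingEnd ℂ) (F1 ω + F2 ω + F3 ω)).re := by
    intro ω
    rw [mul_conj_norm, Complex.ofReal_re]
  constructor
  · have hFFre : Integrable (fun ω =>
        ((F1 ω + F2 ω + F3 ω) * (starRingEnd ℂ) (F1 ω + F2 ω + F3 ω)).re) μ := by
      simpa using hFF.re
    exact hFFre.congr (Filter.Eventually.of_forall fun ω => (hpt ω).symm)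
  · rw [integral_congr_ae (Filter.Eventually.of_forall hpt)]
    have hre : ∫ ω, ((F1 ω + F2 ω + F3 ω) * (starRingEnd ℂ) (F1 ω + F2 ω + F3 ω)).re ∂μ
        = (∫ ω, (F1 ω + F2 ω + F3 ω) * (starRingEnd ℂ) (F1 ω + F2 ω + F3 ω) ∂μ).re := by
      simpa using integral_re hFF
    rw [hre]
    have expand : ∀ ω, (F1 ω + F2 ω + F3 ω) * (starRingEnd ℂ) (F1 ω + F2 ω + F3 ω)
        = (F1 ω * (starRingEnd ℂ) (F1 ω) + F1 ω * (starRingEnd ℂ) (F2 ω)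
            + F1 ω * (starRingEnd ℂ) (F3 ω))
        + (F2 ω * (starRingEnd ℂ) (F1 ω) + F2 ω * (starRingEnd ℂ) (F2 ω)
            + F2 ω * (starRingEnd ℂ) (F3 ω))
        + (F3 ω * (starRingEnd ℂ) (F1 ω) + F3 ω * (starRingEnd ℂ) (F2 ω)
            + F3 ω * (starRingEnd ℂ) (F3 ω)) := by
      intro ω
      simp only [map_add]
      ring
    rw [integral_congr_ae (Filter.Eventually.of_forall expand)]
    rw [integral_add r12s r3s, integral_add r1s r2s, integral_add s1 p13,
      integral_add p11 p12, integral_add s4 p23, integral_add p21 p22,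
      integral_add s7 p33, integral_add p31 p32]
    rw [I11, I12, I13, I21, I22, I23, I31, I32, I33]
    simp

end Stmt10Aux

open Stmt10Aux

/-- for every `P`, the MSE to the jammer-free signal decomposes as
`trace((P − I) A (P − I)ᴴ) + E_J ‖P h_J‖²` with `A = E_s H Hᴴ + N_0 I_B`, the trace being a
nonnegative real number. -/
theorem stmt10
    {Ω : Type*} [MeasurableSpace Ω] (μ : Measure Ω) [IsProbabilityMeasure μ]
    (B U : ℕ) (hB : 0 < B) (hU : 0 < U)
    (H : Matrix (Fin B) (Fin U) ℂ) (hJ : Fin B → ℂ)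
    (Es EJ N0 : ℝ) (hEs : 0 < Es) (hEJ : 0 < EJ) (hN0 : 0 < N0)
    (s : Ω → Fin U → ℂ) (sJ : Ω → ℂ) (n : Ω → Fin B → ℂ)
    (hindep : iIndep
      ![MeasurableSpace.comap s inferInstance,
        MeasurableSpace.comap sJ inferInstance,
        MeasurableSpace.comap n inferInstance] μ)
    (hs2 : MemLp s 2 μ) (hsJ2 : MemLp sJ 2 μ) (hn2 : MemLp n 2 μ)
    (hsmean : ∀ i, ∫ ω, s ω i ∂μ = 0) (hsJmean : ∫ ω, sJ ω ∂μ = 0)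
    (hnmean : ∀ i, ∫ ω, n ω i ∂μ = 0)
    (hscov : ∀ i j, ∫ ω, s ω i * (starRingEnd ℂ) (s ω j) ∂μ = if i = j then (Es : ℂ) else 0)
    (hsJvar : ∫ ω, ‖sJ ω‖ ^ 2 ∂μ = EJ)
    (hncov : ∀ i j, ∫ ω, n ω i * (starRingEnd ℂ) (n ω j) ∂μ = if i = j then (N0 : ℂ) else 0)
    (y : Ω → Fin B → ℂ) (hy : ∀ ω, y ω = H *ᵥ s ω + sJ ω • hJ + n ω)
    (A : Matrix (Fin B) (Fin B) ℂ)
    (hA : A = (Es : ℂ) • (H * Hᴴ) + (N0 : ℂ) • (1 : Matrix (Fin B) (Fin B) ℂ)) :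
    ∀ P : Matrix (Fin B) (Fin B) ℂ,
      (((P - 1) * A * (P - 1)ᴴ).trace).im = 0 ∧
      0 ≤ (((P - 1) * A * (P - 1)ᴴ).trace).re ∧
      ∫ ω, vecNormSq (P *ᵥ y ω - (H *ᵥ s ω + n ω)) ∂μ
        = (((P - 1) * A * (P - 1)ᴴ).trace).re + EJ * vecNormSq (P *ᵥ hJ) := by
  intro P
  classical
  set Q : Matrix (Fin B) (Fin B) ℂ := P - 1 with hQdef
  set a : Matrix (Fin B) (Fin U) ℂ := Q * H with hadef
  set c : Fin B → ℂ := P *ᵥ hJ with hcdef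
  -- trace computation
  have htrace : (Q * A * Qᴴ).trace
      = ((Es * (∑ i, ∑ u, ‖a i u‖ ^ 2) + N0 * (∑ i, ∑ k, ‖Q i k‖ ^ 2) : ℝ) : ℂ) := by
    have h1 : Q * A * Qᴴ = (Es : ℂ) • (a * aᴴ) + (N0 : ℂ) • (Q * Qᴴ) := by
      rw [hA, hadef]
      simp only [Matrix.mul_add, Matrix.add_mul, Matrix.mul_smul, Matrix.smul_mul,
        Matrix.mul_one, Matrix.conjTranspose_mul, Matrix.mul_assoc]
    rw [h1, Matrix.trace_add, Matrix.trace_smul, Matrix.trace_smul,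
      trace_mul_conjTranspose_self, trace_mul_conjTranspose_self]
    push_cast
    simp only [smul_eq_mul]
  -- componentwise L² facts
  have hs2u : ∀ u, MemLp (fun ω => s ω u) 2 μ := fun u =>
    (ContinuousLinearMap.proj (R := ℂ) (φ := fun _ : Fin U => ℂ) u).comp_memLp' hs2
  have hn2k : ∀ k, MemLp (fun ω => n ω k) 2 μ := fun k =>
    (ContinuousLinearMap.proj (R := ℂ) (φ := fun _ : Fin B => ℂ) k).comp_memLp' hn2
  have hsIu : ∀ u, Integrable (fun ω => s ω u) μ := fun u => (hs2u u).integrable one_le_two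
  have hnIk : ∀ k, Integrable (fun ω => n ω k) μ := fun k => (hn2k k).integrable one_le_two
  have hsJI : Integrable sJ μ := hsJ2.integrable one_le_two
  -- independence
  have i01 : IndepFun s sJ μ := hindep.indep (show (0 : Fin 3) ≠ 1 by decide)
  have i02 : IndepFun s n μ := hindep.indep (show (0 : Fin 3) ≠ 2 by decide)
  have i12 : IndepFun sJ n μ := hindep.indep (show (1 : Fin 3) ≠ 2 by decide)
  have hconj : Measurable (starRingEnd ℂ) := Complex.isometry_conj.continuous.measurable
  have hevU : ∀ u : Fin U, Measurable fun v : Fin U → ℂ => v u := fun u => measurable_pi_apply u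
  have hevB : ∀ k : Fin B, Measurable fun v : Fin B → ℂ => v k := fun k => measurable_pi_apply k
  -- vanishing cross moments
  have zsn : ∀ u k, ∫ ω, s ω u * (starRingEnd ℂ) (n ω k) ∂μ = 0 := fun u k =>
    cross_zero (i02.comp (hevU u) (hconj.comp (hevB k))) (hsIu u)
      ((memLp_conj (hn2k k)).integrable one_le_two) (hsmean u)
  have zssJ : ∀ u, ∫ ω, s ω u * (starRingEnd ℂ) (sJ ω) ∂μ = 0 := fun u =>
    cross_zero (i01.comp (hevU u) hconj) (hsIu u)
      ((memLp_conj hsJ2).integrable one_le_two) (hsmean u)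
  have zns : ∀ k u, ∫ ω, n ω k * (starRingEnd ℂ) (s ω u) ∂μ = 0 := fun k u =>
    cross_zero (i02.symm.comp (hevB k) (hconj.comp (hevU u))) (hnIk k)
      ((memLp_conj (hs2u u)).integrable one_le_two) (hnmean k)
  have znsJ : ∀ k, ∫ ω, n ω k * (starRingEnd ℂ) (sJ ω) ∂μ = 0 := fun k =>
    cross_zero (i12.symm.comp (hevB k) hconj) (hnIk k)
      ((memLp_conj hsJ2).integrable one_le_two) (hnmean k)
  have zsJs : ∀ u, ∫ ω, sJ ω * (starRingEnd ℂ) (s ω u) ∂μ = 0 := fun u =>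
    cross_zero (i01.symm.comp measurable_id (hconj.comp (hevU u))) hsJI
      ((memLp_conj (hs2u u)).integrable one_le_two) hsJmean
  have zsJn : ∀ k, ∫ ω, sJ ω * (starRingEnd ℂ) (n ω k) ∂μ = 0 := fun k =>
    cross_zero (i12.comp measurable_id (hconj.comp (hevB k))) hsJI
      ((memLp_conj (hn2k k)).integrable one_le_two) hsJmean
  -- product integrability
  have pss : ∀ u v, Integrable (fun ω => s ω u * (starRingEnd ℂ) (s ω v)) μ := fun u v =>
    integrable_mul_L2 (hs2u u) (memLp_conj (hs2u v))
  have psn : ∀ u k, Integrable (fun ω => s ω u * (starRingEnd ℂ) (n ω k)) μ := fun u k =>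
    integrable_mul_L2 (hs2u u) (memLp_conj (hn2k k))
  have pssJ : ∀ u, Integrable (fun ω => s ω u * (starRingEnd ℂ) (sJ ω)) μ := fun u =>
    integrable_mul_L2 (hs2u u) (memLp_conj hsJ2)
  have pns : ∀ k u, Integrable (fun ω => n ω k * (starRingEnd ℂ) (s ω u)) μ := fun k u =>
    integrable_mul_L2 (hn2k k) (memLp_conj (hs2u u))
  have pnn : ∀ k l, Integrable (fun ω => n ω k * (starRingEnd ℂ) (n ω l)) μ := fun k l =>
    integrable_mul_L2 (hn2k k) (memLp_conj (hn2k l))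
  have pnsJ : ∀ k, Integrable (fun ω => n ω k * (starRingEnd ℂ) (sJ ω)) μ := fun k =>
    integrable_mul_L2 (hn2k k) (memLp_conj hsJ2)
  have psJs : ∀ u, Integrable (fun ω => sJ ω * (starRingEnd ℂ) (s ω u)) μ := fun u =>
    integrable_mul_L2 hsJ2 (memLp_conj (hs2u u))
  have psJn : ∀ k, Integrable (fun ω => sJ ω * (starRingEnd ℂ) (n ω k)) μ := fun k =>
    integrable_mul_L2 hsJ2 (memLp_conj (hn2k k))
  have psJsJ : Integrable (fun ω => sJ ω * (starRingEnd ℂ) (sJ ω)) μ :=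
    integrable_mul_L2 hsJ2 (memLp_conj hsJ2)
  have hsJcov : ∫ ω, sJ ω * (starRingEnd ℂ) (sJ ω) ∂μ = ((EJ : ℝ) : ℂ) := by
    have hpt : ∀ ω, sJ ω * (starRingEnd ℂ) (sJ ω) = ((‖sJ ω‖ ^ 2 : ℝ) : ℂ) := fun ω =>
      mul_conj_norm _
    calc ∫ ω, sJ ω * (starRingEnd ℂ) (sJ ω) ∂μ
        = ∫ ω, ((‖sJ ω‖ ^ 2 : ℝ) : ℂ) ∂μ :=
          integral_congr_ae (Filter.Eventually.of_forall hpt)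
      _ = ((∫ ω, ‖sJ ω‖ ^ 2 ∂μ : ℝ) : ℂ) := integral_ofReal (f := fun ω => ‖sJ ω‖ ^ 2)
      _ = ((EJ : ℝ) : ℂ) := by rw [hsJvar]
  -- the key per-coordinate computation
  have key : ∀ i : Fin B,
      Integrable (fun ω => ‖(∑ u, a i u * s ω u) + (∑ k, Q i k * n ω k)
        + (∑ _v : Fin 1, c i * sJ ω)‖ ^ 2) μ ∧
      ∫ ω, ‖(∑ u, a i u * s ω u) + (∑ k, Q i k * n ω k)
        + (∑ _v : Fin 1, c i * sJ ω)‖ ^ 2 ∂μ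
        = Es * (∑ u, ‖a i u‖ ^ 2) + N0 * (∑ k, ‖Q i k‖ ^ 2) + EJ * ‖c i‖ ^ 2 := by
    intro i
    have hX2 : MemLp (fun ω => ∑ u, a i u * s ω u) 2 μ :=
      memLp_finset_sum _ fun u _ => (hs2u u).const_mul _
    have hY2 : MemLp (fun ω => ∑ k, Q i k * n ω k) 2 μ :=
      memLp_finset_sum _ fun k _ => (hn2k k).const_mul _
    have hZ2 : MemLp (fun ω => ∑ _v : Fin 1, c i * sJ ω) 2 μ :=
      memLp_finset_sum _ fun _ _ => hsJ2.const_mul _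
    -- the nine integrals
    have I11 : ∫ ω, (∑ u, a i u * s ω u) * (starRingEnd ℂ) (∑ v, a i v * s ω v) ∂μ
        = ((Es * ∑ u, ‖a i u‖ ^ 2 : ℝ) : ℂ) := by
      rw [sum_mul_conj_integral (a i) (a i) s s pss]
      simp only [hscov, mul_ite, mul_zero, Finset.sum_ite_eq, Finset.mem_univ, if_true]
      rw [Finset.sum_congr rfl (fun u _ =>
        show a i u * (starRingEnd ℂ) (a i u) * (Es : ℂ) = ((Es * ‖a i u‖ ^ 2 : ℝ) : ℂ) by
          rw [mul_conj_norm]; push_cast; ring)]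
      push_cast [Finset.mul_sum]
      rfl
    have I22 : ∫ ω, (∑ k, Q i k * n ω k) * (starRingEnd ℂ) (∑ l, Q i l * n ω l) ∂μ
        = ((N0 * ∑ k, ‖Q i k‖ ^ 2 : ℝ) : ℂ) := by
      rw [sum_mul_conj_integral (Q i) (Q i) n n pnn]
      simp only [hncov, mul_ite, mul_zero, Finset.sum_ite_eq, Finset.mem_univ, if_true]
      rw [Finset.sum_congr rfl (fun k _ =>
        show Q i k * (starRingEnd ℂ) (Q i k) * (N0 : ℂ) = ((N0 * ‖Q i k‖ ^ 2 : ℝ) : ℂ) by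
          rw [mul_conj_norm]; push_cast; ring)]
      push_cast [Finset.mul_sum]
      rfl
    have I33 : ∫ ω, (∑ _v : Fin 1, c i * sJ ω) * (starRingEnd ℂ) (∑ _v : Fin 1, c i * sJ ω) ∂μ
        = ((EJ * ‖c i‖ ^ 2 : ℝ) : ℂ) := by
      rw [sum_mul_conj_integral (fun _ : Fin 1 => c i) (fun _ : Fin 1 => c i)
        (fun ω _ => sJ ω) (fun ω _ => sJ ω) (fun _ _ => psJsJ)]
      simp only [Finset.univ_unique, Finset.sum_singleton]
      rw [hsJcov, mul_conj_norm]
      push_cast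
      ring
    have I12 : ∫ ω, (∑ u, a i u * s ω u) * (starRingEnd ℂ) (∑ k, Q i k * n ω k) ∂μ = 0 := by
      rw [sum_mul_conj_integral (a i) (Q i) s n psn]
      simp [zsn]
    have I13 : ∫ ω, (∑ u, a i u * s ω u) * (starRingEnd ℂ) (∑ _v : Fin 1, c i * sJ ω) ∂μ
        = 0 := by
      rw [sum_mul_conj_integral (a i) (fun _ : Fin 1 => c i) s (fun ω _ => sJ ω)
        (fun u _ => pssJ u)]
      simp [zssJ]
    have I21 : ∫ ω, (∑ k, Q i k * n ω k) * (starRingEnd ℂ) (∑ u, a i u * s ω u) ∂μ = 0 := by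
      rw [sum_mul_conj_integral (Q i) (a i) n s pns]
      simp [zns]
    have I23 : ∫ ω, (∑ k, Q i k * n ω k) * (starRingEnd ℂ) (∑ _v : Fin 1, c i * sJ ω) ∂μ
        = 0 := by
      rw [sum_mul_conj_integral (Q i) (fun _ : Fin 1 => c i) n (fun ω _ => sJ ω)
        (fun k _ => pnsJ k)]
      simp [znsJ]
    have I31 : ∫ ω, (∑ _v : Fin 1, c i * sJ ω) * (starRingEnd ℂ) (∑ u, a i u * s ω u) ∂μ
        = 0 := by
      rw [sum_mul_conj_integral (fun _ : Fin 1 => c i) (a i) (fun ω _ => sJ ω) s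
        (fun _ u => psJs u)]
      simp [zsJs]
    have I32 : ∫ ω, (∑ _v : Fin 1, c i * sJ ω) * (starRingEnd ℂ) (∑ k, Q i k * n ω k) ∂μ
        = 0 := by
      rw [sum_mul_conj_integral (fun _ : Fin 1 => c i) (Q i) (fun ω _ => sJ ω) n
        (fun _ k => psJn k)]
      simp [zsJn]
    exact norm_sq_integral_three hX2 hY2 hZ2 I11 I22 I33 I12 I13 I21 I23 I31 I32
  -- componentwise decomposition of the error vector
  have hcomp : ∀ ω, ∀ i : Fin B, (P *ᵥ y ω - (H *ᵥ s ω + n ω)) i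
      = (∑ u, a i u * s ω u) + (∑ k, Q i k * n ω k) + (∑ _v : Fin 1, c i * sJ ω) := by
    intro ω i
    have hvec : P *ᵥ y ω - (H *ᵥ s ω + n ω) = a *ᵥ s ω + Q *ᵥ n ω + sJ ω • c := by
      rw [hy ω, hadef, hcdef, hQdef]
      simp only [Matrix.mulVec_add, Matrix.mulVec_smul, Matrix.sub_mulVec,
        Matrix.one_mulVec, ← Matrix.mulVec_mulVec]
      abel
    rw [hvec]
    simp [Matrix.mulVec, dotProduct, mul_comm]
  have hTotal : ∫ ω, vecNormSq (P *ᵥ y ω - (H *ᵥ s ω + n ω)) ∂μ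
      = Es * (∑ i, ∑ u, ‖a i u‖ ^ 2) + N0 * (∑ i, ∑ k, ‖Q i k‖ ^ 2)
        + EJ * (∑ i, ‖c i‖ ^ 2) := by
    have h1 : ∀ ω, vecNormSq (P *ᵥ y ω - (H *ᵥ s ω + n ω))
        = ∑ i, ‖(∑ u, a i u * s ω u) + (∑ k, Q i k * n ω k)
          + (∑ _v : Fin 1, c i * sJ ω)‖ ^ 2 := by
      intro ω
      exact Finset.sum_congr rfl fun i _ => by rw [hcomp ω i]
    rw [integral_congr_ae (Filter.Eventually.of_forall h1),
      integral_finset_sum _ (fun i _ => (key i).1),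
      Finset.sum_congr rfl (fun i _ => (key i).2),
      Finset.sum_add_distrib, Finset.sum_add_distrib,
      ← Finset.mul_sum, ← Finset.mul_sum, ← Finset.mul_sum]
  refine ⟨?_, ?_, ?_⟩
  · rw [htrace]; exact Complex.ofReal_im _
  · rw [htrace, Complex.ofReal_re]; positivity
  · rw [htrace, Complex.ofReal_re, hTotal]
    have hv : vecNormSq c = ∑ i, ‖c i‖ ^ 2 := rfl
    rw [hv]
end

section
/- Under the uplink model with h_J ≠ 0, the optimal unconstrained transform P̂ = I_B − E_J h_J h_Jᴴ C_y⁻¹ achieves the minimal mean squared error E[‖P̂ y − (H s + n)‖²] = E_J ‖h_J‖² ( 1 − E_J h_Jᴴ C_y⁻¹ h_J ); moreover E_J h_Jᴴ C_y⁻¹ h_J ≤ 1, so this minimal value is nonnegative. -/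
open MeasureTheory ProbabilityTheory Matrix
open scoped ComplexOrder

section Helpers

variable {Ω : Type*} [MeasurableSpace Ω] {μ : Measure Ω}

private lemma memL2_mul_integrable (μ : Measure Ω) {X Y : Ω → ℂ}
    (hX : MemLp X 2 μ) (hY : MemLp Y 2 μ) :
    Integrable (fun ω => X ω * Y ω) μ := by
  have h : MemLp (X • Y) 1 μ := hY.smul hX (hpqr := ⟨by
    norm_num [ENNReal.inv_two_add_inv_two]⟩)
  exact memLp_one_iff_integrable.mp h

private lemma memLp_conj {p : ENNReal} {X : Ω → ℂ} (h : MemLp X p μ) :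
    MemLp (fun ω => (starRingEnd ℂ) (X ω)) p μ := by
  have h2 := (RCLike.conjCLE (K := ℂ)).toContinuousLinearMap.comp_memLp' h
  convert h2 using 2
  rfl

private lemma indep_integral_mul_s12 {X Y : Ω → ℂ} [IsProbabilityMeasure μ]
    (hXY : IndepFun X Y μ) (hX : Integrable X μ) (hY : Integrable Y μ) :
    ∫ ω, X ω * Y ω ∂μ = (∫ ω, X ω ∂μ) * ∫ ω, Y ω ∂μ := by
  have mre : Measurable (Complex.re) := Complex.measurable_re
  have mim : Measurable (Complex.im) := Complex.measurable_im
  have hXr : Integrable (fun ω => (X ω).re) μ := hX.re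
  have hXi : Integrable (fun ω => (X ω).im) μ := hX.im
  have hYr : Integrable (fun ω => (Y ω).re) μ := hY.re
  have hYi : Integrable (fun ω => (Y ω).im) μ := hY.im
  have hrr : ∫ ω, (X ω).re * (Y ω).re ∂μ = (∫ ω, (X ω).re ∂μ) * ∫ ω, (Y ω).re ∂μ :=
    (hXY.comp mre mre).integral_mul_eq_mul_integral hXr.aestronglyMeasurable hYr.aestronglyMeasurable
  have hri : ∫ ω, (X ω).re * (Y ω).im ∂μ = (∫ ω, (X ω).re ∂μ) * ∫ ω, (Y ω).im ∂μ :=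
    (hXY.comp mre mim).integral_mul_eq_mul_integral hXr.aestronglyMeasurable hYi.aestronglyMeasurable
  have hir : ∫ ω, (X ω).im * (Y ω).re ∂μ = (∫ ω, (X ω).im ∂μ) * ∫ ω, (Y ω).re ∂μ :=
    (hXY.comp mim mre).integral_mul_eq_mul_integral hXi.aestronglyMeasurable hYr.aestronglyMeasurable
  have hii : ∫ ω, (X ω).im * (Y ω).im ∂μ = (∫ ω, (X ω).im ∂μ) * ∫ ω, (Y ω).im ∂μ :=
    (hXY.comp mim mim).integral_mul_eq_mul_integral hXi.aestronglyMeasurable hYi.aestronglyMeasurable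
  have irr : Integrable (fun ω => (X ω).re * (Y ω).re) μ :=
    (hXY.comp mre mre).integrable_mul hXr hYr
  have iri : Integrable (fun ω => (X ω).re * (Y ω).im) μ :=
    (hXY.comp mre mim).integrable_mul hXr hYi
  have iir : Integrable (fun ω => (X ω).im * (Y ω).re) μ :=
    (hXY.comp mim mre).integrable_mul hXi hYr
  have iii : Integrable (fun ω => (X ω).im * (Y ω).im) μ :=
    (hXY.comp mim mim).integrable_mul hXi hYi
  have hmul : Integrable (fun ω => X ω * Y ω) μ := hXY.integrable_mul hX hY
  have hre := integral_re (𝕜 := ℂ) hmul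
  have him := integral_im (𝕜 := ℂ) hmul
  have hreX := integral_re (𝕜 := ℂ) hX
  have himX := integral_im (𝕜 := ℂ) hX
  have hreY := integral_re (𝕜 := ℂ) hY
  have himY := integral_im (𝕜 := ℂ) hY
  simp only [RCLike.re_to_complex, RCLike.im_to_complex] at hre him hreX himX hreY himY
  apply Complex.ext
  · rw [← hre, Complex.mul_re, ← hreX, ← hreY, ← himX, ← himY, ← hrr, ← hii,
      ← integral_sub irr iii]
    congr 1
  · rw [← him, Complex.mul_im, ← hreX, ← hreY, ← himX, ← himY, ← hri, ← hir,
      ← integral_add iri iir]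
    congr 1

private lemma indep_integral_mul_conj {X Y : Ω → ℂ} [IsProbabilityMeasure μ]
    (hXY : IndepFun X Y μ) (hX : Integrable X μ) (hY : Integrable Y μ) :
    ∫ ω, X ω * (starRingEnd ℂ) (Y ω) ∂μ
      = (∫ ω, X ω ∂μ) * (starRingEnd ℂ) (∫ ω, Y ω ∂μ) := by
  have mconj : Measurable fun z : ℂ => (starRingEnd ℂ) z := by
    have := (RCLike.conjLIE (K := ℂ)).continuous.measurable
    simpa [RCLike.conjLIE_apply] using this
  have h1 : IndepFun X (fun ω => (starRingEnd ℂ) (Y ω)) μ :=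
    hXY.comp measurable_id mconj
  have hYc : Integrable (fun ω => (starRingEnd ℂ) (Y ω)) μ :=
    memLp_one_iff_integrable.mp (memLp_conj (memLp_one_iff_integrable.mpr hY))
  rw [indep_integral_mul_s12 h1 hX hYc, integral_conj]

private lemma integral_sum_mul_sum_conj [IsProbabilityMeasure μ]
    {ι : Type*} [Fintype ι] (a : ι → ℂ) (X : ι → Ω → ℂ) (hX : ∀ i, MemLp (X i) 2 μ) :
    ∫ ω, (∑ i, a i * X i ω) * (starRingEnd ℂ) (∑ j, a j * X j ω) ∂μ
      = ∑ i, ∑ j, (a i * (starRingEnd ℂ) (a j)) * ∫ ω, X i ω * (starRingEnd ℂ) (X j ω) ∂μ := by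
  have hint : ∀ i j, Integrable (fun ω => X i ω * (starRingEnd ℂ) (X j ω)) μ := fun i j =>
    memL2_mul_integrable μ (hX i) (memLp_conj (hX j))
  have step : ∀ ω, (∑ i, a i * X i ω) * (starRingEnd ℂ) (∑ j, a j * X j ω)
      = ∑ i, ∑ j, (a i * (starRingEnd ℂ) (a j)) * (X i ω * (starRingEnd ℂ) (X j ω)) := by
    intro ω
    rw [map_sum, Finset.sum_mul_sum]
    refine Finset.sum_congr rfl fun i _ => Finset.sum_congr rfl fun j _ => ?_
    rw [_root_.map_mul]; ring
  simp_rw [step]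
  rw [integral_finset_sum _ (fun i _ =>
    integrable_finset_sum _ (fun j _ => ((hint i j).const_mul _)))]
  refine Finset.sum_congr rfl fun i _ => ?_
  rw [integral_finset_sum _ (fun j _ => ((hint i j).const_mul _))]
  refine Finset.sum_congr rfl fun j _ => ?_
  exact integral_const_mul _ _

end Helpers

/-- the optimal unconstrained transform `P̂ = I − E_J h_J h_Jᴴ C_y⁻¹` achieves
the minimal MSE `E_J ‖h_J‖² (1 − E_J h_Jᴴ C_y⁻¹ h_J)`; moreover `E_J h_Jᴴ C_y⁻¹ h_J ≤ 1`,
so this minimal value is nonnegative. -/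
theorem stmt12
    {Ω : Type*} [MeasurableSpace Ω] (μ : Measure Ω) [IsProbabilityMeasure μ]
    (B U : ℕ) (hB : 0 < B) (hU : 0 < U)
    (H : Matrix (Fin B) (Fin U) ℂ) (hJ : Fin B → ℂ)
    (Es EJ N0 : ℝ) (hEs : 0 < Es) (hEJ : 0 < EJ) (hN0 : 0 < N0)
    (s : Ω → Fin U → ℂ) (sJ : Ω → ℂ) (n : Ω → Fin B → ℂ)
    (hindep : iIndep
      ![MeasurableSpace.comap s inferInstance,
        MeasurableSpace.comap sJ inferInstance,
        MeasurableSpace.comap n inferInstance] μ)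
    (hs2 : MemLp s 2 μ) (hsJ2 : MemLp sJ 2 μ) (hn2 : MemLp n 2 μ)
    (hsmean : ∀ i, ∫ ω, s ω i ∂μ = 0) (hsJmean : ∫ ω, sJ ω ∂μ = 0)
    (hnmean : ∀ i, ∫ ω, n ω i ∂μ = 0)
    (hscov : ∀ i j, ∫ ω, s ω i * (starRingEnd ℂ) (s ω j) ∂μ = if i = j then (Es : ℂ) else 0)
    (hsJvar : ∫ ω, ‖sJ ω‖ ^ 2 ∂μ = EJ)
    (hncov : ∀ i j, ∫ ω, n ω i * (starRingEnd ℂ) (n ω j) ∂μ = if i = j then (N0 : ℂ) else 0)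
    (y : Ω → Fin B → ℂ) (hy : ∀ ω, y ω = H *ᵥ s ω + sJ ω • hJ + n ω)
    (Cy : Matrix (Fin B) (Fin B) ℂ)
    (hCy : Cy = (Es : ℂ) • (H * Hᴴ) + (EJ : ℂ) • vecMulVec hJ (star hJ)
      + (N0 : ℂ) • (1 : Matrix (Fin B) (Fin B) ℂ))
    (hhJ : hJ ≠ 0)
    (Phat : Matrix (Fin B) (Fin B) ℂ)
    (hPhat : Phat = 1 - (EJ : ℂ) • (vecMulVec hJ (star hJ) * Cy⁻¹)) :
    ∫ ω, vecNormSq (Phat *ᵥ y ω - (H *ᵥ s ω + n ω)) ∂μ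
      = EJ * vecNormSq hJ * (1 - EJ * (star hJ ⬝ᵥ Cy⁻¹ *ᵥ hJ).re) ∧
    EJ * (star hJ ⬝ᵥ Cy⁻¹ *ᵥ hJ).re ≤ 1 ∧
    0 ≤ EJ * vecNormSq hJ * (1 - EJ * (star hJ ⬝ᵥ Cy⁻¹ *ᵥ hJ).re) := by
  classical
  -- ### Linear-algebra setup
  have hvvmul : ∀ x : Fin B → ℂ, vecMulVec hJ (star hJ) *ᵥ x = (star hJ ⬝ᵥ x) • hJ := by
    intro x; funext i
    simp only [mulVec, vecMulVec_apply, dotProduct, Pi.smul_apply, smul_eq_mul,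
      Finset.sum_mul]
    exact Finset.sum_congr rfl fun j _ => by ring
  have hsmulH : ∀ (r : ℝ) (A : Matrix (Fin B) (Fin B) ℂ), A.IsHermitian →
      ((r:ℂ) • A).IsHermitian := by
    intro r A hA
    have : ((r:ℂ) • A)ᴴ = star (r:ℂ) • Aᴴ := conjTranspose_smul _ _
    rw [Matrix.IsHermitian, this, hA.eq]
    congr 1
    simp [Complex.star_def, Complex.conj_ofReal]
  have hvvH : (vecMulVec hJ (star hJ)).IsHermitian := by
    ext i j
    simp [conjTranspose_apply, vecMulVec_apply, mul_comm]
  have hCyH : Cy.IsHermitian := by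
    rw [hCy]
    exact ((hsmulH Es _ (isHermitian_mul_conjTranspose_self H)).add
      (hsmulH EJ _ hvvH)).add (hsmulH N0 _ isHermitian_one)
  have hPD : Cy.PosDef := by
    refine Matrix.PosDef.of_dotProduct_mulVec_pos hCyH fun x hx => ?_
    rw [hCy, add_mulVec, add_mulVec, smul_mulVec, smul_mulVec, smul_mulVec,
      one_mulVec, dotProduct_add, dotProduct_add, dotProduct_smul, dotProduct_smul,
      dotProduct_smul, smul_eq_mul, smul_eq_mul, smul_eq_mul]
    have t1 : (0:ℂ) ≤ star x ⬝ᵥ (H * Hᴴ) *ᵥ x := (posSemidef_self_mul_conjTranspose H).dotProduct_mulVec_nonneg x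
    have t2 : (0:ℂ) ≤ star x ⬝ᵥ vecMulVec hJ (star hJ) *ᵥ x := by
      rw [hvvmul, dotProduct_smul, smul_eq_mul, star_dotProduct]
      exact star_mul_self_nonneg _
    have t3 : (0:ℂ) < star x ⬝ᵥ ((1 : Matrix (Fin B) (Fin B) ℂ) *ᵥ x) := by
      rw [one_mulVec]
      exact dotProduct_star_self_pos_iff.mpr hx
    rw [one_mulVec] at *
    have c1 : (0:ℂ) ≤ (Es:ℂ) := by exact_mod_cast hEs.le
    have c2 : (0:ℂ) ≤ (EJ:ℂ) := by exact_mod_cast hEJ.le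
    have c3 : (0:ℂ) < (N0:ℂ) := by exact_mod_cast hN0
    exact add_pos_of_nonneg_of_pos (add_nonneg (mul_nonneg c1 t1) (mul_nonneg c2 t2))
      (mul_pos c3 t3)
  have hdet : IsUnit Cy.det := (Matrix.isUnit_iff_isUnit_det Cy).mp hPD.isUnit
  have hInvMul : Cy⁻¹ * Cy = 1 := nonsing_inv_mul Cy hdet
  set u : Fin B → ℂ := star hJ ᵥ* Cy⁻¹ with hu
  set α : ℂ := u ⬝ᵥ hJ with hα
  have hαg : star hJ ⬝ᵥ Cy⁻¹ *ᵥ hJ = α := dotProduct_mulVec _ _ _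
  have huCy : u ᵥ* Cy = star hJ := by rw [hu, vecMul_vecMul, hInvMul, vecMul_one]
  have hune : u ≠ 0 := by
    intro h0
    apply hhJ
    have h1 : star hJ = 0 := by rw [← huCy, h0, zero_vecMul]
    have := congrArg star h1
    simpa using this
  have hCyInvH : (Cy⁻¹).IsHermitian := hCyH.inv
  have hconjα : (starRingEnd ℂ) α = α := by
    have e1 : α = star hJ ⬝ᵥ (Cy⁻¹ *ᵥ hJ) := by rw [hα, hu, dotProduct_mulVec]
    calc (starRingEnd ℂ) α = star (star hJ ⬝ᵥ (Cy⁻¹ *ᵥ hJ)) := by rw [← e1]; rfl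
      _ = star (star (star (Cy⁻¹ *ᵥ hJ) ⬝ᵥ hJ)) := by rw [star_dotProduct]
      _ = star (Cy⁻¹ *ᵥ hJ) ⬝ᵥ hJ := star_star _
      _ = (star hJ ᵥ* (Cy⁻¹)ᴴ) ⬝ᵥ hJ := by rw [star_mulVec]
      _ = α := by rw [hCyInvH.eq, ← hu, hα]
  set W : Fin U → ℂ := u ᵥ* H with hW
  set S1 : ℂ := W ⬝ᵥ star W with hS1
  set S2 : ℂ := u ⬝ᵥ star u with hS2
  -- key quadratic identity
  have key : (Es:ℂ) * S1 + (N0:ℂ) * S2 = (starRingEnd ℂ) α - (EJ:ℂ) * (α * (starRingEnd ℂ) α) := by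
    have e1 : S1 = u ⬝ᵥ ((H * Hᴴ) *ᵥ star u) := by
      rw [hS1, hW, show star (u ᵥ* H) = Hᴴ *ᵥ star u from star_vecMul H u,
        dotProduct_mulVec, vecMul_vecMul, ← dotProduct_mulVec]
    have e2 : S2 = u ⬝ᵥ ((1 : Matrix (Fin B) (Fin B) ℂ) *ᵥ star u) := by
      rw [hS2, one_mulVec]
    have e3 : u ⬝ᵥ (Cy *ᵥ star u) = (starRingEnd ℂ) α := by
      rw [dotProduct_mulVec, huCy, star_dotProduct_star, hα]; rfl
    have e4 : u ⬝ᵥ (vecMulVec hJ (star hJ) *ᵥ star u) = (starRingEnd ℂ) α * α := by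
      rw [hvvmul, dotProduct_smul, smul_eq_mul, star_dotProduct_star, hα]; rfl
    have e5 : u ⬝ᵥ (Cy *ᵥ star u)
        = (Es:ℂ) * (u ⬝ᵥ ((H * Hᴴ) *ᵥ star u))
          + (EJ:ℂ) * (u ⬝ᵥ (vecMulVec hJ (star hJ) *ᵥ star u))
          + (N0:ℂ) * (u ⬝ᵥ ((1 : Matrix (Fin B) (Fin B) ℂ) *ᵥ star u)) := by
      conv_lhs => rw [hCy]
      rw [add_mulVec, add_mulVec, smul_mulVec, smul_mulVec, smul_mulVec,
        dotProduct_add, dotProduct_add, dotProduct_smul, dotProduct_smul, dotProduct_smul,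
        smul_eq_mul, smul_eq_mul, smul_eq_mul]
    rw [e3, e4] at e5
    rw [← e1, ← e2] at e5
    linear_combination -e5
  -- ### Probability setup
  -- ### Probability setup
  have h01 : IndepFun s sJ μ := hindep.indep (show (0:Fin 3) ≠ 1 by decide)
  have h02 : IndepFun s n μ := hindep.indep (show (0:Fin 3) ≠ 2 by decide)
  have h12 : IndepFun sJ n μ := hindep.indep (show (1:Fin 3) ≠ 2 by decide)
  have hsk2 : ∀ k, MemLp (fun ω => s ω k) 2 μ := fun k =>
    (ContinuousLinearMap.proj (R := ℂ) (φ := fun _ : Fin U => ℂ) k).comp_memLp' hs2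
  have hnk2 : ∀ k, MemLp (fun ω => n ω k) 2 μ := fun k =>
    (ContinuousLinearMap.proj (R := ℂ) (φ := fun _ : Fin B => ℂ) k).comp_memLp' hn2
  have one_le_two : (1:ENNReal) ≤ 2 := by norm_num
  have hsInt : ∀ k, Integrable (fun ω => s ω k) μ := fun k => (hsk2 k).integrable one_le_two
  have hnInt : ∀ k, Integrable (fun ω => n ω k) μ := fun k => (hnk2 k).integrable one_le_two
  have hsJInt : Integrable sJ μ := hsJ2.integrable one_le_two
  have hsJsJ : ∫ ω, sJ ω * (starRingEnd ℂ) (sJ ω) ∂μ = (EJ:ℂ) := by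
    have hpt : ∀ ω, sJ ω * (starRingEnd ℂ) (sJ ω) = ((‖sJ ω‖^2 : ℝ) : ℂ) := by
      intro ω
      rw [Complex.mul_conj, Complex.normSq_eq_norm_sq]
    simp_rw [hpt]
    have h2 : ∫ ω, ((‖sJ ω‖^2 : ℝ) : ℂ) ∂μ = ((∫ ω, ‖sJ ω‖^2 ∂μ : ℝ) : ℂ) := integral_ofReal
    rw [h2, hsJvar]
  have hcross_sJ_s : ∀ k, ∫ ω, sJ ω * (starRingEnd ℂ) (s ω k) ∂μ = 0 := fun k => by
    have hind : IndepFun sJ (fun ω => s ω k) μ :=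
      (h01.symm).comp measurable_id (measurable_pi_apply k)
    rw [indep_integral_mul_conj hind hsJInt (hsInt k), hsJmean, zero_mul]
  have hcross_s_sJ : ∀ k, ∫ ω, s ω k * (starRingEnd ℂ) (sJ ω) ∂μ = 0 := fun k => by
    have hind : IndepFun (fun ω => s ω k) sJ μ :=
      h01.comp (measurable_pi_apply k) measurable_id
    rw [indep_integral_mul_conj hind (hsInt k) hsJInt, hsmean, zero_mul]
  have hcross_s_n : ∀ k l, ∫ ω, s ω k * (starRingEnd ℂ) (n ω l) ∂μ = 0 := fun k l => by
    have hind : IndepFun (fun ω => s ω k) (fun ω => n ω l) μ :=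
      h02.comp (measurable_pi_apply k) (measurable_pi_apply l)
    rw [indep_integral_mul_conj hind (hsInt k) (hnInt l), hsmean, zero_mul]
  have hcross_n_s : ∀ l k, ∫ ω, n ω l * (starRingEnd ℂ) (s ω k) ∂μ = 0 := fun l k => by
    have hind : IndepFun (fun ω => n ω l) (fun ω => s ω k) μ :=
      (h02.symm).comp (measurable_pi_apply l) (measurable_pi_apply k)
    rw [indep_integral_mul_conj hind (hnInt l) (hsInt k), hnmean, zero_mul]
  have hcross_sJ_n : ∀ l, ∫ ω, sJ ω * (starRingEnd ℂ) (n ω l) ∂μ = 0 := fun l => by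
    have hind : IndepFun sJ (fun ω => n ω l) μ :=
      h12.comp measurable_id (measurable_pi_apply l)
    rw [indep_integral_mul_conj hind hsJInt (hnInt l), hsJmean, zero_mul]
  have hcross_n_sJ : ∀ l, ∫ ω, n ω l * (starRingEnd ℂ) (sJ ω) ∂μ = 0 := fun l => by
    have hind : IndepFun (fun ω => n ω l) sJ μ :=
      (h12.symm).comp (measurable_pi_apply l) measurable_id
    rw [indep_integral_mul_conj hind (hnInt l) hsJInt, hsJmean, map_zero, mul_zero]
  -- the random vector family
  set RV : (Unit ⊕ (Fin U ⊕ Fin B)) → Ω → ℂ :=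
    Sum.elim (fun _ => sJ) (Sum.elim (fun k ω => s ω k) (fun k ω => n ω k)) with hRV
  set varv : (Unit ⊕ (Fin U ⊕ Fin B)) → ℂ :=
    Sum.elim (fun _ => (EJ:ℂ)) (Sum.elim (fun _ => (Es:ℂ)) (fun _ => (N0:ℂ))) with hvarv
  set coef : (Unit ⊕ (Fin U ⊕ Fin B)) → ℂ :=
    Sum.elim (fun _ => 1 - (EJ:ℂ) * α)
      (Sum.elim (fun k => -(EJ:ℂ) * W k) (fun k => -(EJ:ℂ) * u k)) with hcoef
  have hRV2 : ∀ t, MemLp (RV t) 2 μ := by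
    rintro (⟨⟩|k|k)
    · exact hsJ2
    · exact hsk2 k
    · exact hnk2 k
  have hM : ∀ t t', ∫ ω, RV t ω * (starRingEnd ℂ) (RV t' ω) ∂μ
      = if t = t' then varv t else 0 := by
    rintro (⟨⟩|k|k) (⟨⟩|l|l) <;>
      simp only [hRV, hvarv, Sum.elim_inl, Sum.elim_inr]
    · simpa using hsJsJ
    · simpa using hcross_sJ_s l
    · simpa using hcross_sJ_n l
    · simpa using hcross_s_sJ k
    · rw [hscov k l]; by_cases h : k = l <;> simp [h]
    · simpa using hcross_s_n k l
    · simpa using hcross_n_sJ k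
    · simpa using hcross_n_s k l
    · rw [hncov k l]; by_cases h : k = l <;> simp [h]
  set Z : Ω → ℂ := fun ω => ∑ t, coef t * RV t ω with hZ
  have hZ2 : MemLp Z 2 μ := memLp_finset_sum _ (fun t _ => (hRV2 t).const_mul (coef t))
  -- pointwise identity
  have hZd : ∀ ω, Z ω = sJ ω - (EJ:ℂ) * (star hJ ⬝ᵥ (Cy⁻¹ *ᵥ y ω)) := by
    intro ω
    have hsum : Z ω = (1 - (EJ:ℂ)*α) * sJ ω
        + ((∑ k, (-(EJ:ℂ) * W k) * s ω k) + ∑ k, (-(EJ:ℂ) * u k) * n ω k) := by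
      rw [hZ]
      show (∑ t, coef t * RV t ω) = _
      rw [Fintype.sum_sum_type, Fintype.sum_sum_type]
      simp [hcoef, hRV]
    have hWs : (∑ k, (-(EJ:ℂ) * W k) * s ω k) = -((EJ:ℂ) * (W ⬝ᵥ s ω)) := by
      rw [dotProduct, Finset.mul_sum, ← Finset.sum_neg_distrib]
      exact Finset.sum_congr rfl fun k _ => by ring
    have hns : (∑ k, (-(EJ:ℂ) * u k) * n ω k) = -((EJ:ℂ) * (u ⬝ᵥ n ω)) := by
      rw [dotProduct, Finset.mul_sum, ← Finset.sum_neg_distrib]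
      exact Finset.sum_congr rfl fun k _ => by ring
    have huy : star hJ ⬝ᵥ (Cy⁻¹ *ᵥ y ω) = W ⬝ᵥ s ω + sJ ω * α + u ⬝ᵥ n ω := by
      rw [dotProduct_mulVec, ← hu, hy ω, dotProduct_add, dotProduct_add, dotProduct_smul,
        dotProduct_mulVec, ← hW, smul_eq_mul, ← hα]
    rw [hsum, hWs, hns, huy]
    ring
  have key1 : ∀ ω, Phat *ᵥ y ω - (H *ᵥ s ω + n ω) = Z ω • hJ := by
    intro ω
    rw [hPhat, sub_mulVec, one_mulVec, smul_mulVec, ← mulVec_mulVec, hvvmul, hZd ω,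
      hy ω]
    funext i
    simp only [Pi.add_apply, Pi.sub_apply, Pi.smul_apply, smul_eq_mul]
    ring
  have hnormsqsmul : ∀ z : ℂ, vecNormSq (z • hJ) = ‖z‖^2 * vecNormSq hJ := by
    intro z
    unfold vecNormSq
    rw [Finset.mul_sum]
    exact Finset.sum_congr rfl fun i _ => by
      simp [Pi.smul_apply, smul_eq_mul, norm_mul, mul_pow]
  have hLHS : ∫ ω, vecNormSq (Phat *ᵥ y ω - (H *ᵥ s ω + n ω)) ∂μ
      = (∫ ω, ‖Z ω‖^2 ∂μ) * vecNormSq hJ := by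
    simp_rw [key1, hnormsqsmul]
    exact integral_mul_const _ _
  have hZint : Integrable (fun ω => Z ω * (starRingEnd ℂ) (Z ω)) μ :=
    memL2_mul_integrable μ hZ2 (memLp_conj hZ2)
  have hnorm_to_V : ∫ ω, ‖Z ω‖^2 ∂μ = (∫ ω, Z ω * (starRingEnd ℂ) (Z ω) ∂μ).re := by
    have hpt : ∀ ω, ‖Z ω‖^2 = (Z ω * (starRingEnd ℂ) (Z ω)).re := by
      intro ω
      rw [Complex.mul_conj, Complex.normSq_eq_norm_sq, Complex.ofReal_re]
    simp_rw [hpt]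
    have h := integral_re (𝕜 := ℂ) hZint
    simpa [RCLike.re_to_complex] using h
  -- compute the complex second moment of Z
  have hVval : ∫ ω, Z ω * (starRingEnd ℂ) (Z ω) ∂μ = (EJ:ℂ) * (1 - (EJ:ℂ) * α) := by
    simp only [hZ]
    rw [integral_sum_mul_sum_conj coef RV hRV2]
    have hinner : ∀ t, (∑ t', (coef t * (starRingEnd ℂ) (coef t'))
        * ∫ ω, RV t ω * (starRingEnd ℂ) (RV t' ω) ∂μ)
        = coef t * (starRingEnd ℂ) (coef t) * varv t := by
      intro t
      rw [Finset.sum_eq_single t]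
      · rw [hM t t]; simp
      · intro b _ hb
        rw [hM t b, if_neg (Ne.symm hb), mul_zero]
      · intro h; exact absurd (Finset.mem_univ t) h
    rw [Finset.sum_congr rfl fun t _ => hinner t]
    rw [Fintype.sum_sum_type, Fintype.sum_sum_type]
    have hterm1 : ∑ x : Unit, coef (Sum.inl x) * (starRingEnd ℂ) (coef (Sum.inl x))
        * varv (Sum.inl x)
        = (1 - (EJ:ℂ)*α) * (1 - (EJ:ℂ)*α) * (EJ:ℂ) := by
      simp [hcoef, hvarv, map_sub, _root_.map_mul, _root_.map_one, Complex.conj_ofReal, hconjα]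
    have hterm2 : ∑ k, coef (Sum.inr (Sum.inl k)) * (starRingEnd ℂ) (coef (Sum.inr (Sum.inl k)))
        * varv (Sum.inr (Sum.inl k)) = (Es:ℂ) * ((EJ:ℂ)^2 * S1) := by
      simp only [hcoef, hvarv, Sum.elim_inl, Sum.elim_inr]
      rw [hS1, dotProduct, Finset.mul_sum, Finset.mul_sum]
      refine Finset.sum_congr rfl fun k _ => ?_
      simp only [Pi.star_apply, _root_.map_mul, _root_.map_neg, Complex.conj_ofReal, RCLike.star_def]
      ring
    have hterm3 : ∑ k, coef (Sum.inr (Sum.inr k)) * (starRingEnd ℂ) (coef (Sum.inr (Sum.inr k)))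
        * varv (Sum.inr (Sum.inr k)) = (N0:ℂ) * ((EJ:ℂ)^2 * S2) := by
      simp only [hcoef, hvarv, Sum.elim_inl, Sum.elim_inr]
      rw [hS2, dotProduct, Finset.mul_sum, Finset.mul_sum]
      refine Finset.sum_congr rfl fun k _ => ?_
      simp only [Pi.star_apply, _root_.map_mul, _root_.map_neg, Complex.conj_ofReal, RCLike.star_def]
      ring
    rw [hterm1, hterm2, hterm3]
    have key' : (Es:ℂ) * S1 + (N0:ℂ) * S2 = α - (EJ:ℂ) * (α * α) := by
      rw [key, hconjα]
    linear_combination (EJ:ℂ)^2 * key'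
  -- the real quantities
  have hα_re : ((α.re : ℝ) : ℂ) = α := Complex.conj_eq_iff_re.mp hconjα
  have hS1r : S1 = ((∑ k, ‖W k‖^2 : ℝ) : ℂ) := by
    rw [hS1, dotProduct, Complex.ofReal_sum]
    refine Finset.sum_congr rfl fun k _ => ?_
    rw [Pi.star_apply, RCLike.star_def, Complex.mul_conj, Complex.normSq_eq_norm_sq]
  have hS2r : S2 = ((∑ k, ‖u k‖^2 : ℝ) : ℂ) := by
    rw [hS2, dotProduct, Complex.ofReal_sum]
    refine Finset.sum_congr rfl fun k _ => ?_
    rw [Pi.star_apply, RCLike.star_def, Complex.mul_conj, Complex.normSq_eq_norm_sq]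
  have hreal : Es * (∑ k, ‖W k‖^2) + N0 * (∑ k, ‖u k‖^2) = α.re - EJ * (α.re * α.re) := by
    have hk := key
    rw [hconjα, hS1r, hS2r, ← hα_re] at hk
    exact_mod_cast hk
  have hs1nonneg : 0 ≤ ∑ k, ‖W k‖^2 := Finset.sum_nonneg fun i _ => by positivity
  have hs2pos : 0 < ∑ k, ‖u k‖^2 := by
    obtain ⟨k, hk⟩ := Function.ne_iff.mp hune
    refine Finset.sum_pos' (fun i _ => by positivity) ⟨k, Finset.mem_univ k, ?_⟩
    have hk' : u k ≠ 0 := hk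
    exact pow_pos (norm_pos_iff.mpr hk') 2
  have ha_pos : 0 < α.re := by nlinarith [sq_nonneg α.re, mul_pos hN0 hs2pos, mul_nonneg hEs.le hs1nonneg, mul_nonneg hEJ.le (sq_nonneg α.re)]
  have hEJa : EJ * α.re < 1 := by
    nlinarith [mul_pos hN0 hs2pos, mul_nonneg hEs.le hs1nonneg]
  -- final numeric value
  have hVre : (∫ ω, Z ω * (starRingEnd ℂ) (Z ω) ∂μ).re = EJ * (1 - EJ * α.re) := by
    rw [hVval, ← hα_re]
    rw [show ((EJ:ℂ) * (1 - (EJ:ℂ) * ((α.re : ℝ) : ℂ))) = (((EJ * (1 - EJ * α.re) : ℝ)) : ℂ) by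
      push_cast; ring]
    exact Complex.ofReal_re _
  have hKnn : 0 ≤ vecNormSq hJ := by
    unfold vecNormSq
    exact Finset.sum_nonneg fun i _ => by positivity
  refine ⟨?_, ?_, ?_⟩
  · rw [hLHS, hnorm_to_V, hVre, hαg]
    ring
  · rw [hαg]
    exact hEJa.le
  · rw [hαg]
    have h1 : 0 ≤ 1 - EJ * α.re := by linarith
    exact mul_nonneg (mul_nonneg hEJ.le hKnn) h1
end
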